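/- arXiv:1812.01814 — 2 statements merged into one kernel-verified Lean document; each statement's English description precedes it below -/
import Mathlib

section
/- Let H = (V, E) be a hypergraph in the family L0. Then for every real polynomial p such that for every positive integer k, p(k) equals the number of weak proper k-colorings of H, and for every real number λ < 0, one has (-1)^{|V|} · p(λ) > 0. In particular the chromatic polynomial of H has no zero in the interval (-∞, 0). -/
open Finset Polynomial

variable {α : Type}

/-- `φ : α → Fin k` is a weak proper coloring of the hypergraph with edge set `E`:
every edge contains two vertices with different colors. -/
def IsWeakProper [DecidableEq α] (E : Finset (Finset α)) {k : ℕ} (φ : α → Fin k) : Prop :=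
  ∀ e ∈ E, ∃ u ∈ e, ∃ v ∈ e, φ u ≠ φ v

instance [DecidableEq α] (E : Finset (Finset α)) {k : ℕ} (φ : α → Fin k) :
    Decidable (IsWeakProper E φ) := by
  unfold IsWeakProper; infer_instance

/-- The number of weak proper `k`-colorings of the hypergraph with vertex set `α`
(a finite type) and edge set `E`. -/
def countColorings [Fintype α] [DecidableEq α] (E : Finset (Finset α)) (k : ℕ) : ℕ :=
  (Finset.univ.filter fun φ : α → Fin k => IsWeakProper E φ).card

/-- `(v 0, es 0, v 1, es 1, …, v (t-1), es (t-1), v 0)` is a cycle in the hypergraph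
with edge set `E`: `t ≥ 2`, the vertices are pairwise distinct, the edges are pairwise
distinct edges of `E`, and `{v i, v (i+1)} ⊆ es i` for every `i` (cyclically). -/
def IsCycle (E : Finset (Finset α)) (t : ℕ) (v : ZMod t → α) (es : ZMod t → Finset α) : Prop :=
  2 ≤ t ∧ Function.Injective v ∧ Function.Injective es ∧
    (∀ i, es i ∈ E) ∧ ∀ i, v i ∈ es i ∧ v (i + 1) ∈ es i

/-- Membership in the family `L0`: every edge has even cardinality, and for every cycle
there exist two distinct vertices `x, y` in the union of the edges of the cycle with
`{x, y} ∈ E`. -/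
def MemL0 [DecidableEq α] (E : Finset (Finset α)) : Prop :=
  (∀ e ∈ E, Even e.card) ∧
    ∀ (t : ℕ) (v : ZMod t → α) (es : ZMod t → Finset α), IsCycle E t v es →
      ∃ x y : α, x ≠ y ∧ (∃ i, x ∈ es i) ∧ (∃ j, y ∈ es j) ∧ ({x, y} : Finset α) ∈ E

/-- Membership in the family `L1`: every edge has even cardinality, and every cycle
contains an edge of cardinality `2`. -/
def MemL1 (E : Finset (Finset α)) : Prop :=
  (∀ e ∈ E, Even e.card) ∧
    ∀ (t : ℕ) (v : ZMod t → α) (es : ZMod t → Finset α), IsCycle E t v es →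
      ∃ i, (es i).card = 2

/-- The simple graph whose edges are the `2`-element members of `E`. -/
def pairGraph [DecidableEq α] (E : Finset (Finset α)) : SimpleGraph α where
  Adj x y := x ≠ y ∧ ({x, y} : Finset α) ∈ E
  symm := by
    constructor
    intro x y h
    exact ⟨Ne.symm h.1, by rw [Finset.pair_comm]; exact h.2⟩
  loopless := by constructor; intro x h; exact h.1 rfl

/-- Membership in the family `L0'`: `E` is in `L0` and the graph on the vertex set
with edge set `E₂ = {e ∈ E : |e| = 2}` is connected. -/
def MemL0' [DecidableEq α] (E : Finset (Finset α)) : Prop :=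
  MemL0 E ∧ (pairGraph (E.filter fun e => e.card = 2)).Connected

/-- A hypergraph is Sperner if no edge is contained in another distinct edge. -/
def IsSperner (E : Finset (Finset α)) : Prop :=
  ∀ e₁ ∈ E, ∀ e₂ ∈ E, e₁ ⊆ e₂ → e₁ = e₂

/-- The edge set of the Sperner subhypergraph: the edges of `E` that are minimal
with respect to inclusion. -/
def minimalEdges [DecidableEq α] (E : Finset (Finset α)) : Finset (Finset α) :=
  E.filter fun e => ∀ e' ∈ E, e' ⊆ e → e' = e

/-- The map identifying all vertices of `e` into the single new vertex `none`;
vertices outside `e` are kept (as `some`-values). -/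
def contractMap [DecidableEq α] (e : Finset α) : α → Option {v : α // v ∉ e} :=
  fun v => if h : v ∈ e then none else some ⟨v, h⟩

/-- The edge set of the contraction `H/e`: remove `e` and identify all of its
vertices into the single new vertex `none`. -/
def contractEdges [DecidableEq α] (E : Finset (Finset α)) (e : Finset α) :
    Finset (Finset (Option {v : α // v ∉ e})) :=
  (E.erase e).image fun e' => e'.image (contractMap e)


section Aux
variable {β : Type} [DecidableEq β]

lemma mem_minimalEdges {E : Finset (Finset β)} {m : Finset β} :
    m ∈ minimalEdges E ↔ m ∈ E ∧ ∀ e' ∈ E, e' ⊆ m → e' = m := by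
  simp [minimalEdges]

lemma exists_minimal_subset {E : Finset (Finset β)} :
    ∀ (n : ℕ) (e : Finset β), e ∈ E → e.card ≤ n → ∃ m ∈ minimalEdges E, m ⊆ e := by
  intro n
  induction n with
  | zero =>
    intro e he hc
    refine ⟨e, mem_minimalEdges.mpr ⟨he, fun e' _ hsub => ?_⟩, subset_rfl⟩
    have : e = ∅ := Finset.card_eq_zero.mp (Nat.le_zero.mp hc)
    subst this
    exact Finset.subset_empty.mp hsub
  | succ n ih =>
    intro e he hc
    by_cases hmin : ∀ e' ∈ E, e' ⊆ e → e' = e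
    · exact ⟨e, mem_minimalEdges.mpr ⟨he, hmin⟩, subset_rfl⟩
    · push_neg at hmin
      obtain ⟨e', he', hsub, hne⟩ := hmin
      have hlt : e'.card ≤ n := by
        have := Finset.card_lt_card (Finset.ssubset_iff_subset_ne.mpr ⟨hsub, hne⟩)
        omega
      obtain ⟨m, hm, hms⟩ := ih e' he' hlt
      exact ⟨m, hm, hms.trans hsub⟩

lemma isWeakProper_minimalEdges_iff {E : Finset (Finset β)} {k : ℕ} (φ : β → Fin k) :
    IsWeakProper (minimalEdges E) φ ↔ IsWeakProper E φ := by
  constructor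
  · intro h e he
    obtain ⟨m, hm, hms⟩ := exists_minimal_subset e.card e he le_rfl
    obtain ⟨u, hu, v, hv, huv⟩ := h m hm
    exact ⟨u, hms hu, v, hms hv, huv⟩
  · intro h e he
    exact h e (mem_minimalEdges.mp he).1

lemma countColorings_minimalEdges [Fintype β] (E : Finset (Finset β)) (k : ℕ) :
    countColorings (minimalEdges E) k = countColorings E k := by
  unfold countColorings
  congr 1
  apply Finset.filter_congr
  intro φ _
  simp only [isWeakProper_minimalEdges_iff]

lemma IsCycle.mono {E E' : Finset (Finset β)} (hEE : E ⊆ E') {t : ℕ} {v : ZMod t → β}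
    {es : ZMod t → Finset β} (h : IsCycle E t v es) : IsCycle E' t v es :=
  ⟨h.1, h.2.1, h.2.2.1, fun i => hEE (h.2.2.2.1 i), h.2.2.2.2⟩

lemma memL0_minimalEdges {E : Finset (Finset β)} (hne : ∀ e ∈ E, e.Nonempty) (hE : MemL0 E) :
    MemL0 (minimalEdges E) := by
  obtain ⟨heven, hcyc⟩ := hE
  constructor
  · exact fun e he => heven e (mem_minimalEdges.mp he).1
  · intro t v es hC
    obtain ⟨x, y, hxy, hx, hy, hpair⟩ := hcyc t v es (hC.mono (Finset.filter_subset _ _))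
    refine ⟨x, y, hxy, hx, hy, mem_minimalEdges.mpr ⟨hpair, ?_⟩⟩
    intro e' he' hsub
    apply Finset.eq_of_subset_of_card_le hsub
    have h2 : ({x, y} : Finset β).card = 2 := Finset.card_pair hxy
    obtain ⟨c, hc⟩ := heven e' he'
    have := Finset.card_pos.mpr (hne e' he')
    omega

lemma memL0_of_card_two {E : Finset (Finset β)} (h2 : ∀ e ∈ E, e.card = 2) : MemL0 E := by
  constructor
  · intro e he; rw [h2 e he]; exact even_two
  · intro t v es hC
    obtain ⟨ht, hvinj, hesinj, hesE, hmem⟩ := hC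
    obtain ⟨x, y, hxy, hexy⟩ := Finset.card_eq_two.mp (h2 (es 0) (hesE 0))
    exact ⟨x, y, hxy, ⟨0, by rw [hexy]; simp⟩, ⟨0, by rw [hexy]; simp⟩, by rw [← hexy]; exact hesE 0⟩

lemma exists_pair_of_double {E : Finset (Finset β)} (hE : MemL0 E)
    {e₁ e₂ : Finset β} (h1 : e₁ ∈ E) (h2 : e₂ ∈ E) (h12 : e₁ ≠ e₂)
    {u v : β} (huv : u ≠ v) (hu1 : u ∈ e₁) (hv1 : v ∈ e₁) (hu2 : u ∈ e₂) (hv2 : v ∈ e₂) :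
    ∃ x y : β, x ≠ y ∧ (x ∈ e₁ ∨ x ∈ e₂) ∧ (y ∈ e₁ ∨ y ∈ e₂) ∧ ({x, y} : Finset β) ∈ E := by
  have hz : ∀ i : ZMod 2, i = 0 ∨ i = 1 := by decide
  have h10 : (1 : ZMod 2) ≠ 0 := by decide
  have hC : IsCycle E 2 (fun i => if i = 0 then u else v) (fun i => if i = 0 then e₁ else e₂) := by
    refine ⟨le_refl 2, ?_, ?_, ?_, ?_⟩
    · intro i j hij
      rcases hz i with hi | hi <;> rcases hz j with hj | hj <;> subst hi <;> subst hj <;>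
        simp_all <;> exact absurd hij (by simpa using huv)
    · intro i j hij
      rcases hz i with hi | hi <;> rcases hz j with hj | hj <;> subst hi <;> subst hj <;>
        simp_all <;> exact absurd hij (by simpa using h12)
    · intro i
      rcases hz i with hi | hi <;> subst hi <;> simp_all
    · intro i
      have h20 : (2 : ZMod 2) = 0 := by decide
      rcases hz i with hi | hi <;> subst hi <;>
        simp_all [show (0:ZMod 2)+1 = 1 by decide, show (1:ZMod 2)+1 = 0 by decide]
  obtain ⟨x, y, hxy, ⟨i, hx⟩, ⟨j, hy⟩, hp⟩ := hE.2 2 _ _ hC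
  refine ⟨x, y, hxy, ?_, ?_, hp⟩
  · rcases hz i with hi | hi <;> subst hi <;> simp_all
  · rcases hz j with hj | hj <;> subst hj <;> simp_all

end Aux

section Contract
variable {β : Type} [DecidableEq β]

lemma contractMap_eq_none {e : Finset β} {z : β} : contractMap e z = none ↔ z ∈ e := by
  unfold contractMap; split <;> simp_all

lemma contractMap_eq_some {e : Finset β} {z : β} {w : {v : β // v ∉ e}}
    (h : contractMap e z = some w) : z = w.1 ∧ z ∉ e := by
  unfold contractMap at h
  split at h
  · exact absurd h (by simp)
  · obtain rfl := Option.some_injective _ h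
    exact ⟨rfl, by assumption⟩

lemma contractMap_eq_iff {e : Finset β} {z₁ z₂ : β} :
    contractMap e z₁ = contractMap e z₂ ↔ (z₁ ∈ e ∧ z₂ ∈ e) ∨ z₁ = z₂ := by
  constructor
  · intro h
    unfold contractMap at h
    split at h <;> split at h
    · exact Or.inl ⟨‹_›, ‹_›⟩
    · exact absurd h (by simp)
    · exact absurd h (by simp)
    · exact Or.inr (by simpa [Subtype.ext_iff] using h)
  · rintro (⟨h1, h2⟩ | rfl)
    · unfold contractMap; simp [h1, h2]
    · rfl

lemma mem_contractEdges {E : Finset (Finset β)} {e : Finset β}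
    {ε : Finset (Option {v : β // v ∉ e})} :
    ε ∈ contractEdges E e ↔ ∃ e' ∈ E.erase e, e'.image (contractMap e) = ε := by
  simp [contractEdges]

lemma none_mem_image_contract {e e' : Finset β} :
    none ∈ e'.image (contractMap e) ↔ (e' ∩ e).Nonempty := by
  simp only [Finset.mem_image, Finset.Nonempty, Finset.mem_inter]
  constructor
  · rintro ⟨z, hz, h⟩; exact ⟨z, hz, contractMap_eq_none.mp h⟩
  · rintro ⟨z, hz, h⟩; exact ⟨z, hz, contractMap_eq_none.mpr h⟩

lemma mem_of_some_mem_image {e e' : Finset β} {w : {v : β // v ∉ e}}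
    (h : some w ∈ e'.image (contractMap e)) : w.1 ∈ e' := by
  obtain ⟨z, hz, hcm⟩ := Finset.mem_image.mp h
  obtain ⟨rfl, -⟩ := contractMap_eq_some hcm
  exact hz

lemma card_image_contract_of_disjoint {e e' : Finset β} (h : ¬(e' ∩ e).Nonempty) :
    (e'.image (contractMap e)).card = e'.card := by
  apply Finset.card_image_of_injOn
  intro z₁ h₁ z₂ h₂ hz
  rcases contractMap_eq_iff.mp hz with ⟨hz₁, hz₂⟩ | h
  · exact absurd ⟨z₁, Finset.mem_inter.mpr ⟨h₁, hz₁⟩⟩ h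
  · exact h

lemma card_image_contract_of_inter {e e' : Finset β} (h : (e' ∩ e).Nonempty) :
    (e'.image (contractMap e)).card = (e' \ e).card + 1 := by
  have himg : e'.image (contractMap e) = insert none ((e' \ e).image (contractMap e)) := by
    ext o
    cases o with
    | none =>
      simp only [Finset.mem_insert, true_or, iff_true, eq_self_iff_true]
      exact none_mem_image_contract.mpr h
    | some w =>
      simp only [Finset.mem_insert, reduceCtorEq, false_or]
      constructor
      · intro hw
        refine Finset.mem_image.mpr ⟨w.1, Finset.mem_sdiff.mpr ⟨mem_of_some_mem_image hw, w.2⟩, ?_⟩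
        unfold contractMap
        simp [w.2]
      · intro hw
        obtain ⟨z, hz, hcm⟩ := Finset.mem_image.mp hw
        exact Finset.mem_image.mpr ⟨z, (Finset.mem_sdiff.mp hz).1, hcm⟩
  rw [himg, Finset.card_insert_of_notMem, Finset.card_image_of_injOn]
  · intro z₁ h₁ z₂ h₂ hz
    rcases contractMap_eq_iff.mp hz with ⟨hz₁, hz₂⟩ | hh
    · exact absurd hz₁ (Finset.mem_sdiff.mp h₁).2
    · exact hh
  · intro hc
    obtain ⟨z, hz, hcm⟩ := Finset.mem_image.mp hc
    exact (Finset.mem_sdiff.mp hz).2 (contractMap_eq_none.mp hcm)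

lemma contract_nonempty {E : Finset (Finset β)} {e : Finset β}
    (hne : ∀ e' ∈ E, e'.Nonempty) :
    ∀ ε ∈ contractEdges E e, ε.Nonempty := by
  intro ε hε
  obtain ⟨e', he', rfl⟩ := mem_contractEdges.mp hε
  exact (hne e' (Finset.mem_of_mem_erase he')).image _

lemma card_option_compl [Fintype β] (e : Finset β) :
    Fintype.card (Option {v : β // v ∉ e}) = Fintype.card β - e.card + 1 := by
  rw [Fintype.card_option]
  congr 1
  rw [Fintype.card_subtype_compl]
  simp

lemma countColorings_empty [Fintype β] (k : ℕ) :
    countColorings (∅ : Finset (Finset β)) k = k ^ Fintype.card β := by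
  unfold countColorings
  have h1 : (Finset.univ.filter fun φ : β → Fin k => IsWeakProper ∅ φ) = Finset.univ := by
    apply Finset.filter_true_of_mem
    intro φ _ e he
    exact absurd he (Finset.notMem_empty e)
  rw [h1, Finset.card_univ, Fintype.card_fun]
  simp

lemma isWeakProper_iff_erase [Fintype β] {E : Finset (Finset β)} {e : Finset β} (he : e ∈ E)
    {k : ℕ} (φ : β → Fin k) :
    IsWeakProper E φ ↔ IsWeakProper (E.erase e) φ ∧ ¬(∀ u ∈ e, ∀ v ∈ e, φ u = φ v) := by
  constructor
  · intro h
    refine ⟨fun e' he' => h e' (Finset.mem_of_mem_erase he'), ?_⟩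
    obtain ⟨u, hu, v, hv, huv⟩ := h e he
    push_neg
    exact ⟨u, hu, v, hv, huv⟩
  · rintro ⟨h, hc⟩
    intro e' he'
    rcases eq_or_ne e' e with rfl | hne
    · push_neg at hc
      exact hc
    · exact h e' (Finset.mem_erase.mpr ⟨hne, he'⟩)

lemma card_const_eq_contract [Fintype β] {E : Finset (Finset β)} {e : Finset β}
    (hene : e.Nonempty) (k : ℕ) :
    ((Finset.univ.filter fun φ : β → Fin k => IsWeakProper (E.erase e) φ).filter
      (fun φ => ∀ u ∈ e, ∀ v ∈ e, φ u = φ v)).card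
      = countColorings (contractEdges E e) k := by
  classical
  obtain ⟨u₀, hu₀⟩ := hene
  unfold countColorings
  apply Finset.card_bij'
    (i := fun φ _ => fun o : Option {v : β // v ∉ e} => o.elim (φ u₀) (fun w => φ w.1))
    (j := fun ψ _ => ψ ∘ contractMap e)
  · -- hi : maps into target
    intro φ hφ
    rw [Finset.mem_filter] at hφ ⊢
    obtain ⟨hφ1, hconst⟩ := hφ
    rw [Finset.mem_filter] at hφ1
    obtain ⟨-, hproper⟩ := hφ1
    refine ⟨Finset.mem_univ _, ?_⟩
    intro ε hε
    obtain ⟨e', he', rfl⟩ := mem_contractEdges.mp hε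
    obtain ⟨u, hu, v, hv, huv⟩ := hproper e' he'
    have key : ∀ z : β, (Option.elim (contractMap e z) (φ u₀) (fun w => φ w.1)) = φ z := by
      intro z
      unfold contractMap
      split
      · exact hconst u₀ hu₀ z ‹_›
      · rfl
    refine ⟨contractMap e u, Finset.mem_image_of_mem _ hu,
            contractMap e v, Finset.mem_image_of_mem _ hv, ?_⟩
    beta_reduce
    rw [key u, key v]
    exact huv
  · -- hj
    intro ψ hψ
    rw [Finset.mem_filter] at hψ ⊢
    obtain ⟨-, hproper⟩ := hψ
    constructor
    · rw [Finset.mem_filter]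
      refine ⟨Finset.mem_univ _, ?_⟩
      intro e' he'
      have hε : e'.image (contractMap e) ∈ contractEdges E e :=
        mem_contractEdges.mpr ⟨e', he', rfl⟩
      obtain ⟨a, ha, b, hb, hab⟩ := hproper _ hε
      obtain ⟨za, hza, rfl⟩ := Finset.mem_image.mp ha
      obtain ⟨zb, hzb, rfl⟩ := Finset.mem_image.mp hb
      exact ⟨za, hza, zb, hzb, hab⟩
    · intro u hu v hv
      simp only [Function.comp_apply]
      rw [contractMap_eq_none.mpr hu, contractMap_eq_none.mpr hv]
  · -- left inverse
    intro φ hφ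
    rw [Finset.mem_filter] at hφ
    obtain ⟨-, hconst⟩ := hφ
    funext z
    simp only [Function.comp_apply]
    unfold contractMap
    split
    · exact hconst u₀ hu₀ z ‹_›
    · rfl
  · -- right inverse
    intro ψ hψ
    funext o
    cases o with
    | none =>
      simp only [Function.comp_apply, Option.elim]
      rw [contractMap_eq_none.mpr hu₀]
    | some w =>
      simp only [Function.comp_apply, Option.elim]
      have : contractMap e w.1 = some w := by
        unfold contractMap
        simp [w.2]
      rw [this]

lemma countColorings_erase [Fintype β] {E : Finset (Finset β)} {e : Finset β} (he : e ∈ E)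
    (hene : e.Nonempty) (k : ℕ) :
    countColorings (E.erase e) k = countColorings E k + countColorings (contractEdges E e) k := by
  have h3 := card_const_eq_contract (E := E) hene k
  unfold countColorings at h3 ⊢
  set s := Finset.univ.filter (fun φ : β → Fin k => IsWeakProper (E.erase e) φ) with hs
  have hsplit := Finset.card_filter_add_card_filter_not
      (s := s) (p := fun φ => ∀ u ∈ e, ∀ v ∈ e, φ u = φ v)
  have h2 : (s.filter fun φ => ¬ ∀ u ∈ e, ∀ v ∈ e, φ u = φ v)
      = Finset.univ.filter (fun φ : β → Fin k => IsWeakProper E φ) := by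
    rw [hs, Finset.filter_filter]
    apply Finset.filter_congr
    intro φ _
    constructor
    · rintro ⟨ha, hb⟩
      exact (isWeakProper_iff_erase he φ).mpr ⟨ha, hb⟩
    · intro h
      exact (isWeakProper_iff_erase he φ).mp h
  rw [← hsplit, h2, h3, add_comm]

end Contract

section Big
variable {β : Type} [DecidableEq β]

lemma memL0_erase_of_big {E : Finset (Finset β)} (hE : MemL0 E) {e : Finset β}
    (hbig : 4 ≤ e.card) : MemL0 (E.erase e) := by
  refine ⟨fun e' he' => hE.1 e' (Finset.mem_of_mem_erase he'), ?_⟩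
  intro t v es hC
  obtain ⟨x, y, hxy, hx, hy, hp⟩ := hE.2 t v es (hC.mono (Finset.erase_subset e E))
  refine ⟨x, y, hxy, hx, hy, Finset.mem_erase.mpr ⟨?_, hp⟩⟩
  intro h
  have := Finset.card_pair hxy
  rw [h] at this
  omega

lemma contract_card_two {E : Finset (Finset β)} (h2 : ∀ e' ∈ E, e'.card = 2) {e : Finset β}
    (he : e ∈ E) :
    ∀ ε ∈ contractEdges E e, ε.card = 2 := by
  intro ε hε
  obtain ⟨e', he', rfl⟩ := mem_contractEdges.mp hε
  obtain ⟨he'ne, he'E⟩ := Finset.mem_erase.mp he'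
  by_cases hint : (e' ∩ e).Nonempty
  · rw [card_image_contract_of_inter hint]
    have hsd := Finset.card_sdiff_add_card_inter e' e
    have hile : (e' ∩ e).card ≤ 1 := by
      by_contra hgt
      push_neg at hgt
      have hsub : e' ∩ e ⊆ e' := Finset.inter_subset_left
      have : e' ∩ e = e' := Finset.eq_of_subset_of_card_le hsub (by rw [h2 e' he'E]; omega)
      have he'sube : e' ⊆ e := by rw [← this]; exact Finset.inter_subset_right
      rcases Finset.mem_erase.mp he' with ⟨hne', -⟩
      exact hne' (Finset.eq_of_subset_of_card_le he'sube (by rw [h2 e' he'E, h2 e he]))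
    have hpos : 1 ≤ (e' ∩ e).card := Finset.card_pos.mpr hint
    have := h2 e' he'E
    omega
  · rw [card_image_contract_of_disjoint hint]
    exact h2 e' he'E

lemma IsCycle.shift {E : Finset (Finset β)} {t : ℕ} {v : ZMod t → β} {es : ZMod t → Finset β}
    (h : IsCycle E t v es) (c : ZMod t) :
    IsCycle E t (fun i => v (i + c)) (fun i => es (i + c)) := by
  obtain ⟨ht, hv, hes, hEE, hm⟩ := h
  refine ⟨ht, fun i j hij => ?_, fun i j hij => ?_, fun i => hEE _, fun i => ⟨(hm (i + c)).1, ?_⟩⟩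
  · exact add_right_cancel (hv hij)
  · exact add_right_cancel (hes hij)
  · have := (hm (i + c)).2
    show v (i + 1 + c) ∈ es (i + c)
    rwa [add_right_comm]

/-- In a Sperner hypergraph from L0 with all edges even and nonempty, no image edge of the
contraction by an edge `e` with `4 ≤ |e|` that is minimal can have odd cardinality. -/
lemma even_min_contract {E : Finset (Finset β)} (hne : ∀ e' ∈ E, e'.Nonempty) (hE : MemL0 E)
    (hsp : ∀ a ∈ E, ∀ b ∈ E, a ⊆ b → a = b) {e : Finset β} (he : e ∈ E) (hbig : 4 ≤ e.card) :
    ∀ ε ∈ minimalEdges (contractEdges E e), Even ε.card := by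
  intro ε hε
  obtain ⟨hεF, hεmin⟩ := mem_minimalEdges.mp hε
  obtain ⟨e', he', himg⟩ := mem_contractEdges.mp hεF
  obtain ⟨he'ne, he'E⟩ := Finset.mem_erase.mp he'
  by_cases hint : (e' ∩ e).Nonempty
  · by_contra hodd
    -- |ε| = |e' \ e| + 1 is odd, |e'| even ⇒ |e' ∩ e| even and ≥ 1, so ≥ 2
    have hc1 : ε.card = (e' \ e).card + 1 := by rw [← himg]; exact card_image_contract_of_inter hint
    have hsd := Finset.card_sdiff_add_card_inter e' e
    obtain ⟨c, hc⟩ := hE.1 e' he'E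
    have hint1 : 1 ≤ (e' ∩ e).card := Finset.card_pos.mpr hint
    have hint2 : 2 ≤ (e' ∩ e).card := by
      rcases Nat.even_or_odd (e' ∩ e).card with hev | hodd'
      · obtain ⟨d, hd⟩ := hev; omega
      · exfalso; apply hodd
        obtain ⟨d, hd⟩ := hodd'
        exact ⟨(e' \ e).card / 2 + 1, by omega⟩
    obtain ⟨u, hu, v, hv, huv⟩ := Finset.one_lt_card.mp hint2
    obtain ⟨hu1, hu2⟩ := Finset.mem_inter.mp hu
    obtain ⟨hv1, hv2⟩ := Finset.mem_inter.mp hv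
    obtain ⟨x, y, hxy, hx, hy, hpE⟩ :=
      exists_pair_of_double hE he'E he he'ne huv hu1 hv1 hu2 hv2
    -- not both in e, not both in e'
    have hnb_e : ¬(x ∈ e ∧ y ∈ e) := by
      rintro ⟨hxe, hye⟩
      have hsub : ({x, y} : Finset β) ⊆ e := by
        intro z hz
        rcases Finset.mem_insert.mp hz with rfl | hz
        · exact hxe
        · rw [Finset.mem_singleton.mp hz]; exact hye
      have := hsp _ hpE _ he hsub
      have hcard := Finset.card_pair hxy
      rw [this] at hcard
      omega
    have hnb_e' : ¬(x ∈ e' ∧ y ∈ e') := by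
      rintro ⟨hxe, hye⟩
      have hsub : ({x, y} : Finset β) ⊆ e' := by
        intro z hz
        rcases Finset.mem_insert.mp hz with rfl | hz
        · exact hxe
        · rw [Finset.mem_singleton.mp hz]; exact hye
      have hpe' := hsp _ hpE _ he'E hsub
      have hcard := Finset.card_pair hxy
      rw [hpe'] at hcard
      -- e' has card 2 but e' ∩ e has card ≥ 2, so e' ⊆ e and then e' = e, contradiction
      have : e' ∩ e = e' := Finset.eq_of_subset_of_card_le Finset.inter_subset_left (by omega)
      have he'sube : e' ⊆ e := by rw [← this]; exact Finset.inter_subset_right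
      exact he'ne (hsp _ he'E _ he he'sube)
    -- produce a ∈ e, b ∈ e' \ e with {a, b} ∈ E
    obtain ⟨a, b, hae, hbe', hbne, hab, habE⟩ :
        ∃ a b : β, a ∈ e ∧ b ∈ e' ∧ b ∉ e ∧ a ≠ b ∧ ({a, b} : Finset β) ∈ E := by
      rcases hx with hxe' | hxe
      · -- x ∈ e'
        by_cases hxine : x ∈ e
        · -- then y ∉ e, y ∈ e'? no : y ∈ e' ∨ y ∈ e; y ∉ e forces y ∈ e'
          have hyne : y ∉ e := fun hye => hnb_e ⟨hxine, hye⟩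
          have hye' : y ∈ e' := by rcases hy with h | h; exacts [h, absurd h hyne]
          exact ⟨x, y, hxine, hye', hyne, hxy, hpE⟩
        · -- x ∈ e' \ e ; then y ∉ e' so y ∈ e
          have hyne' : y ∉ e' := fun hye' => hnb_e' ⟨hxe', hye'⟩
          have hye : y ∈ e := by rcases hy with h | h; exacts [absurd h hyne', h]
          exact ⟨y, x, hye, hxe', hxine, hxy.symm, by rwa [Finset.pair_comm]⟩
      · -- x ∈ e
        by_cases hxine' : x ∈ e'
        · have hyne' : y ∉ e' := fun h => hnb_e' ⟨hxine', h⟩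
          have hye : y ∈ e := by rcases hy with h | h; exacts [absurd h hyne', h]
          exact absurd ⟨hxe, hye⟩ hnb_e
        · have hyne : y ∉ e := fun h => hnb_e ⟨hxe, h⟩
          have hye' : y ∈ e' := by rcases hy with h | h; exacts [h, absurd h hyne]
          exact ⟨x, y, hxe, hye', hyne, hxy, hpE⟩
    -- the image of {a, b} is a 2-element edge of the contraction contained in ε
    have hpair_ne : ({a, b} : Finset β) ≠ e := by
      intro h
      have := Finset.card_pair hab
      rw [h] at this
      omega
    have hpairF : ({a, b} : Finset β).image (contractMap e) ∈ contractEdges E e :=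
      mem_contractEdges.mpr ⟨{a, b}, Finset.mem_erase.mpr ⟨hpair_ne, habE⟩, rfl⟩
    have himg_pair : ({a, b} : Finset β).image (contractMap e)
        = {none, contractMap e b} := by
      rw [Finset.image_insert, Finset.image_singleton, contractMap_eq_none.mpr hae]
    have hsubε : ({a, b} : Finset β).image (contractMap e) ⊆ ε := by
      rw [himg_pair]
      intro o ho
      rcases Finset.mem_insert.mp ho with rfl | ho
      · rw [← himg]
        exact none_mem_image_contract.mpr hint
      · rw [Finset.mem_singleton.mp ho, ← himg]
        exact Finset.mem_image_of_mem _ hbe'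
    have heq := hεmin _ hpairF hsubε
    apply hodd
    rw [← heq, himg_pair, Finset.card_insert_of_notMem, Finset.card_singleton]
    · exact even_two
    · have hcmb : contractMap e b = some ⟨b, hbne⟩ := by unfold contractMap; simp [hbne]
      rw [Finset.mem_singleton, hcmb]
      simp
  · obtain ⟨c, hc⟩ := hE.1 e' he'E
    rw [← himg, card_image_contract_of_disjoint hint]
    exact ⟨c, hc⟩

end Big

section CycleContract
variable {β : Type} [DecidableEq β]

lemma two_le_card_contract {E : Finset (Finset β)} (hne : ∀ e' ∈ E, e'.Nonempty)
    (heven : ∀ e' ∈ E, Even e'.card)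
    (hsp : ∀ a ∈ E, ∀ b ∈ E, a ⊆ b → a = b) {e : Finset β} (he : e ∈ E) :
    ∀ ε ∈ contractEdges E e, 2 ≤ ε.card := by
  intro ε hε
  obtain ⟨e', he', rfl⟩ := mem_contractEdges.mp hε
  obtain ⟨he'ne, he'E⟩ := Finset.mem_erase.mp he'
  have h2 : 2 ≤ e'.card := by
    obtain ⟨c, hc⟩ := heven e' he'E
    have := Finset.card_pos.mpr (hne e' he'E)
    omega
  by_cases hint : (e' ∩ e).Nonempty
  · rw [card_image_contract_of_inter hint]
    have hsd : (e' \ e).Nonempty := by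
      rw [Finset.sdiff_nonempty]
      intro hsub
      exact he'ne (hsp _ he'E _ he hsub)
    have := Finset.card_pos.mpr hsd
    omega
  · rw [card_image_contract_of_disjoint hint]
    exact h2

lemma pair_mem_min_contract {E : Finset (Finset β)} (hne : ∀ e' ∈ E, e'.Nonempty)
    (heven : ∀ e' ∈ E, Even e'.card)
    (hsp : ∀ a ∈ E, ∀ b ∈ E, a ⊆ b → a = b) {e : Finset β} (he : e ∈ E) (hbig : 4 ≤ e.card)
    {p q : β} (hpq : p ≠ q) (hpE : ({p, q} : Finset β) ∈ E) :
    contractMap e p ≠ contractMap e q ∧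
      ({contractMap e p, contractMap e q} : Finset (Option {v : β // v ∉ e}))
        ∈ minimalEdges (contractEdges E e) := by
  have hpair2 : ({p, q} : Finset β).card = 2 := Finset.card_pair hpq
  have hpair_ne : ({p, q} : Finset β) ≠ e := by
    intro h; rw [h] at hpair2; omega
  have hnb : ¬(p ∈ e ∧ q ∈ e) := by
    rintro ⟨hp, hq⟩
    have hsub : ({p, q} : Finset β) ⊆ e := by
      intro z hz
      rcases Finset.mem_insert.mp hz with rfl | hz
      · exact hp
      · rw [Finset.mem_singleton.mp hz]; exact hq
    exact hpair_ne (hsp _ hpE _ he hsub)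
  have hcm : contractMap e p ≠ contractMap e q := by
    intro h
    rcases contractMap_eq_iff.mp h with hb | hb
    · exact hnb hb
    · exact hpq hb
  refine ⟨hcm, mem_minimalEdges.mpr ⟨?_, ?_⟩⟩
  · have : ({p, q} : Finset β).image (contractMap e)
        = {contractMap e p, contractMap e q} := by
      rw [Finset.image_insert, Finset.image_singleton]
    rw [← this]
    exact mem_contractEdges.mpr ⟨{p, q}, Finset.mem_erase.mpr ⟨hpair_ne, hpE⟩, rfl⟩
  · intro ε' hε' hsub
    apply Finset.eq_of_subset_of_card_le hsub
    have h1 := two_le_card_contract hne heven hsp he ε' hε'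
    have h2 : ({contractMap e p, contractMap e q} : Finset (Option {v : β // v ∉ e})).card = 2 :=
      Finset.card_pair hcm
    omega

lemma cycle_min_contract {E : Finset (Finset β)} (hne : ∀ e' ∈ E, e'.Nonempty) (hE : MemL0 E)
    (hsp : ∀ a ∈ E, ∀ b ∈ E, a ⊆ b → a = b) {e : Finset β} (he : e ∈ E) (hbig : 4 ≤ e.card)
    (t : ℕ) (w : ZMod t → Option {v : β // v ∉ e})
    (εs : ZMod t → Finset (Option {v : β // v ∉ e}))
    (hC : IsCycle (minimalEdges (contractEdges E e)) t w εs) :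
    ∃ x y, x ≠ y ∧ (∃ i, x ∈ εs i) ∧ (∃ j, y ∈ εs j) ∧
      ({x, y} : Finset (Option {v : β // v ∉ e})) ∈ minimalEdges (contractEdges E e) := by
  have ht := hC.1
  haveI : NeZero t := ⟨by omega⟩
  have key : ∀ (w : ZMod t → Option {v : β // v ∉ e})
      (εs : ZMod t → Finset (Option {v : β // v ∉ e})),
      IsCycle (minimalEdges (contractEdges E e)) t w εs →
      (w 0 = none ∨ ∀ i, w i ≠ none) →
      ∃ x y, x ≠ y ∧ (∃ i, x ∈ εs i) ∧ (∃ j, y ∈ εs j) ∧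
        ({x, y} : Finset (Option {v : β // v ∉ e})) ∈ minimalEdges (contractEdges E e) := by
    clear hC w εs
    intro w εs hC hcase
    obtain ⟨ht', hwinj, hεinj, hεF, hmem⟩ := hC
    have hex : ∀ i, ∃ e'', (e'' ∈ E.erase e) ∧ e''.image (contractMap e) = εs i := fun i =>
      mem_contractEdges.mp (Finset.mem_of_mem_filter _ (hεF i))
    choose e' he'mem he'img using hex
    have he'E : ∀ i, e' i ∈ E := fun i => (Finset.mem_erase.mp (he'mem i)).2
    have he'ne : ∀ i, e' i ≠ e := fun i => (Finset.mem_erase.mp (he'mem i)).1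
    have he'inj : Function.Injective e' := fun i j hij =>
      hεinj (by rw [← he'img i, ← he'img j, hij])
    have hvx : ∀ i, ∃ z, z ∈ e' i ∧ contractMap e z = w i := by
      intro i
      have h1 := (hmem i).1
      rw [← he'img i] at h1
      obtain ⟨z, hz, hcz⟩ := Finset.mem_image.mp h1
      exact ⟨z, hz, hcz⟩
    choose x hx hcmx using hvx
    have hxinj : Function.Injective x := fun i j hij =>
      hwinj (by rw [← hcmx i, ← hcmx j, hij])
    have hinE : ∀ (i : ZMod t) (z : β), z ∈ e' i → contractMap e z ∈ εs i := fun i z hz => by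
      rw [← he'img i]; exact Finset.mem_image_of_mem _ hz
    have process : ∀ p q : β, p ≠ q → ({p, q} : Finset β) ∈ E →
        (∃ i, contractMap e p ∈ εs i) → (∃ j, contractMap e q ∈ εs j) →
        ∃ x y, x ≠ y ∧ (∃ i, x ∈ εs i) ∧ (∃ j, y ∈ εs j) ∧
          ({x, y} : Finset (Option {v : β // v ∉ e})) ∈ minimalEdges (contractEdges E e) := by
      intro p q hpq hpE hp hq
      obtain ⟨hcm, hmin⟩ := pair_mem_min_contract hne hE.1 hsp he hbig hpq hpE
      exact ⟨contractMap e p, contractMap e q, hcm, hp, hq, hmin⟩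
    have hstep : ∀ i : ZMod t, w (i + 1) ≠ none → x (i + 1) ∈ e' i := by
      intro i hn1
      have hw1 := (hmem i).2
      rw [← he'img i] at hw1
      obtain ⟨z, hz, hcz⟩ := Finset.mem_image.mp hw1
      have heqc : contractMap e z = contractMap e (x (i + 1)) := by rw [hcz, hcmx]
      rcases contractMap_eq_iff.mp heqc with ⟨hz1, hz2⟩ | heq
      · exfalso
        apply hn1
        rw [← hcmx (i + 1)]
        exact contractMap_eq_none.mpr hz2
      · exact heq ▸ hz
    rcases hcase with h0 | hall
    · -- the new vertex is on the cycle
      have hz₂e : x 0 ∈ e := contractMap_eq_none.mp (by rw [hcmx 0, h0])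
      set j₁ : ZMod t := ((t - 1 : ℕ) : ZMod t) with hj₁
      have hj₁1 : j₁ + 1 = 0 := by
        have h : (((t - 1) + 1 : ℕ) : ZMod t) = 0 := by
          rw [Nat.sub_add_cancel (by omega)]; exact ZMod.natCast_self t
        push_cast at h
        rw [hj₁]
        linear_combination h
      have hwj₁ : (none : Option {v : β // v ∉ e}) ∈ εs j₁ := by
        have h := (hmem j₁).2
        rwa [hj₁1, h0] at h
      have hwj₁' : (none : Option {v : β // v ∉ e}) ∈ (e' j₁).image (contractMap e) := by
        rwa [he'img j₁]
      obtain ⟨z₁, hz₁e', hz₁cm⟩ := Finset.mem_image.mp hwj₁'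
      have hz₁e : z₁ ∈ e := contractMap_eq_none.mp hz₁cm
      have hnone0 : (none : Option {v : β // v ∉ e}) ∈ εs 0 := by
        rw [← h0]; exact (hmem 0).1
      have hwnone : ∀ i : ZMod t, w i = none → i = 0 := fun i hi =>
        hwinj (hi.trans h0.symm)
      have hxne : ∀ i : ZMod t, i ≠ 0 → x i ∉ e := by
        intro i hi hxe
        exact hi (hwnone i (by rw [← hcmx i]; exact contractMap_eq_none.mpr hxe))
      by_cases hz12 : z₁ = x 0
      · -- reuse the same length
        have hCyc : IsCycle E t x e' := by
          refine ⟨ht', hxinj, he'inj, he'E, fun i => ⟨hx i, ?_⟩⟩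
          by_cases hi1 : i + 1 = 0
          · have hij : i = j₁ := add_right_cancel (hi1.trans hj₁1.symm)
            rw [hi1, hij, ← hz12]
            exact hz₁e'
          · exact hstep i (fun hn => hi1 (hwnone _ hn))
        obtain ⟨p, q, hpq, ⟨i, hpi⟩, ⟨j, hqj⟩, hpE⟩ := hE.2 t x e' hCyc
        exact process p q hpq hpE ⟨i, hinE i p hpi⟩ ⟨j, hinE j q hqj⟩
      · -- insert the edge e into the cycle
        haveI : NeZero (t + 1) := ⟨t.succ_ne_zero⟩
        set V : ZMod (t + 1) → β :=
          fun i => if i.val = t then z₁ else x ((i.val : ℕ) : ZMod t) with hV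
        set ES : ZMod (t + 1) → Finset β :=
          fun i => if i.val = t then e else e' ((i.val : ℕ) : ZMod t) with hES
        have hVt : ∀ i : ZMod (t + 1), i.val = t → V i = z₁ := fun i h => by simp [hV, h]
        have hVlt : ∀ i : ZMod (t + 1), i.val ≠ t → V i = x ((i.val : ℕ) : ZMod t) :=
          fun i h => by simp [hV, h]
        have hESt : ∀ i : ZMod (t + 1), i.val = t → ES i = e := fun i h => by simp [hES, h]
        have hESlt : ∀ i : ZMod (t + 1), i.val ≠ t → ES i = e' ((i.val : ℕ) : ZMod t) :=
          fun i h => by simp [hES, h]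
        have hvlt : ∀ i : ZMod (t + 1), i.val < t + 1 := fun i => ZMod.val_lt i
        have hsucc : ∀ i : ZMod (t + 1),
            (i.val = t ∧ (i + 1).val = 0) ∨ (i.val < t ∧ (i + 1).val = i.val + 1) := by
          intro i
          have hlt := hvlt i
          have hcast : i = ((i.val : ℕ) : ZMod (t + 1)) := (ZMod.natCast_rightInverse i).symm
          rcases eq_or_lt_of_le (Nat.lt_succ_iff.mp hlt) with heq | hlt'
          · left
            refine ⟨heq, ?_⟩
            have : i + 1 = 0 := by
              rw [hcast, heq]
              have h2 : (((t + 1 : ℕ)) : ZMod (t + 1)) = 0 := ZMod.natCast_self (t + 1)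
              push_cast at h2 ⊢
              linear_combination h2
            rw [this, ZMod.val_zero]
          · right
            refine ⟨hlt', ?_⟩
            have : i + 1 = (((i.val + 1 : ℕ)) : ZMod (t + 1)) := by
              conv_lhs => rw [hcast]
              push_cast; ring
            rw [this, ZMod.val_cast_of_lt (by omega)]
        have hzmodcast : ∀ a : ℕ, a < t → (((a : ℕ) : ZMod t)).val = a :=
          fun a ha => ZMod.val_cast_of_lt ha
        have hcastne : ∀ a : ℕ, 0 < a → a < t → ((a : ℕ) : ZMod t) ≠ 0 := by
          intro a h0a hat h
          have := hzmodcast a hat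
          rw [h, ZMod.val_zero] at this
          omega
        have hCyc : IsCycle E (t + 1) V ES := by
          refine ⟨by omega, ?_, ?_, ?_, ?_⟩
          · -- V injective
            intro i j hij
            by_cases hit : i.val = t <;> by_cases hjt : j.val = t
            · exact ZMod.val_injective _ (hit.trans hjt.symm)
            · exfalso
              rw [hVt i hit, hVlt j hjt] at hij
              by_cases hj0 : j.val = 0
              · rw [hj0] at hij
                exact hz12 (by rw [hij, Nat.cast_zero])
              · exact hxne _ (hcastne j.val (by omega) (by have := hvlt j; omega)) (hij ▸ hz₁e)
            · exfalso
              rw [hVlt i hit, hVt j hjt] at hij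
              by_cases hi0 : i.val = 0
              · rw [hi0] at hij
                exact hz12 (by rw [← hij, Nat.cast_zero])
              · exact hxne _ (hcastne i.val (by omega) (by have := hvlt i; omega))
                  (by rw [hij]; exact hz₁e)
            · rw [hVlt i hit, hVlt j hjt] at hij
              have := hxinj hij
              have hvi := hzmodcast i.val (by have := hvlt i; omega)
              have hvj := hzmodcast j.val (by have := hvlt j; omega)
              apply ZMod.val_injective
              rw [← hvi, ← hvj, this]
          · -- ES injective
            intro i j hij
            by_cases hit : i.val = t <;> by_cases hjt : j.val = t
            · exact ZMod.val_injective _ (hit.trans hjt.symm)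
            · exfalso
              rw [hESt i hit, hESlt j hjt] at hij
              exact he'ne _ hij.symm
            · exfalso
              rw [hESlt i hit, hESt j hjt] at hij
              exact he'ne _ hij
            · rw [hESlt i hit, hESlt j hjt] at hij
              have := he'inj hij
              have hvi := hzmodcast i.val (by have := hvlt i; omega)
              have hvj := hzmodcast j.val (by have := hvlt j; omega)
              apply ZMod.val_injective
              rw [← hvi, ← hvj, this]
          · -- edges in E
            intro i
            by_cases hit : i.val = t
            · rw [hESt i hit]; exact he
            · rw [hESlt i hit]; exact he'E _
          · -- memberships
            intro i
            rcases hsucc i with ⟨hit, hi1⟩ | ⟨hit, hi1⟩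
            · -- i.val = t
              constructor
              · rw [hVt i hit, hESt i hit]; exact hz₁e
              · have hne_t : (i + 1).val ≠ t := by rw [hi1]; omega
                rw [hESt i hit, hVlt (i + 1) hne_t, hi1, Nat.cast_zero]
                exact hz₂e
            · -- i.val < t
              have hitne : i.val ≠ t := by omega
              constructor
              · rw [hVlt i hitne, hESlt i hitne]; exact hx _
              · rw [hESlt i hitne]
                by_cases h1t : i.val + 1 = t
                · rw [hVt (i + 1) (by rw [hi1]; exact h1t)]
                  have hji : ((i.val : ℕ) : ZMod t) = j₁ := by
                    rw [hj₁]
                    congr 1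
                    omega
                  rw [hji]
                  exact hz₁e'
                · rw [hVlt (i + 1) (by rw [hi1]; exact h1t)]
                  have hcasteq : (((i + 1).val : ℕ) : ZMod t) = ((i.val : ℕ) : ZMod t) + 1 := by
                    rw [hi1]; push_cast; ring
                  rw [hcasteq]
                  apply hstep
                  intro hn
                  have h00 := hwnone _ hn
                  rw [← hcasteq] at h00
                  have := hzmodcast (i + 1).val (by omega)
                  rw [h00, ZMod.val_zero] at this
                  omega
        obtain ⟨p, q, hpq, ⟨i, hpi⟩, ⟨j, hqj⟩, hpE⟩ := hE.2 (t + 1) V ES hCyc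
        have hmk : ∀ (r : β) (i : ZMod (t + 1)), r ∈ ES i → ∃ i', contractMap e r ∈ εs i' := by
          intro r i hri
          by_cases hit : i.val = t
          · rw [hESt i hit] at hri
            exact ⟨0, by rw [contractMap_eq_none.mpr hri]; exact hnone0⟩
          · rw [hESlt i hit] at hri
            exact ⟨_, hinE _ r hri⟩
        exact process p q hpq hpE (hmk p i hpi) (hmk q j hqj)
    · -- no index maps to none
      have hCyc : IsCycle E t x e' :=
        ⟨ht', hxinj, he'inj, he'E, fun i => ⟨hx i, hstep i (hall (i + 1))⟩⟩
      obtain ⟨p, q, hpq, ⟨i, hpi⟩, ⟨j, hqj⟩, hpE⟩ := hE.2 t x e' hCyc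
      exact process p q hpq hpE ⟨i, hinE i p hpi⟩ ⟨j, hinE j q hqj⟩
  by_cases hn : ∃ i₀, w i₀ = none
  · obtain ⟨i₀, hi₀⟩ := hn
    obtain ⟨X, Y, hXY, ⟨i, hXi⟩, ⟨j, hYj⟩, hmin⟩ :=
      key (fun i => w (i + i₀)) (fun i => εs (i + i₀)) (hC.shift i₀) (Or.inl (by simpa using hi₀))
    exact ⟨X, Y, hXY, ⟨i + i₀, hXi⟩, ⟨j + i₀, hYj⟩, hmin⟩
  · push_neg at hn
    exact key w εs hC (Or.inr hn)

end CycleContract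

section MainProof

lemma memL0_min_contract {β : Type} [DecidableEq β] {E : Finset (Finset β)}
    (hne : ∀ e' ∈ E, e'.Nonempty) (hE : MemL0 E)
    (hsp : ∀ a ∈ E, ∀ b ∈ E, a ⊆ b → a = b) {e : Finset β} (he : e ∈ E) (hbig : 4 ≤ e.card) :
    MemL0 (minimalEdges (contractEdges E e)) :=
  ⟨even_min_contract hne hE hsp he hbig,
    fun t w εs hC => cycle_min_contract hne hE hsp he hbig t w εs hC⟩

theorem main_lemma : ∀ (N : ℕ) (β : Type) [Fintype β] [DecidableEq β]
    (E : Finset (Finset β)), Fintype.card β + E.card ≤ N →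
    (∀ e ∈ E, e.Nonempty) → MemL0 E →
    ∃ q : Polynomial ℝ, (∀ k : ℕ, 0 < k → q.eval (k : ℝ) = countColorings E k) ∧
      ∀ lam : ℝ, lam < 0 → 0 < (-1 : ℝ) ^ (Fintype.card β) * q.eval lam := by
  intro N
  induction N using Nat.strong_induction_on with
  | _ N ih =>
    intro β _ _ E hle hne hE
    rcases E.eq_empty_or_nonempty with rfl | hEne
    · refine ⟨Polynomial.X ^ (Fintype.card β), ?_, ?_⟩
      · intro k hk
        rw [Polynomial.eval_pow, Polynomial.eval_X, countColorings_empty]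
        push_cast
        rfl
      · intro lam hlam
        rw [Polynomial.eval_pow, Polynomial.eval_X]
        have h1 : (-1 : ℝ) ^ (Fintype.card β) * lam ^ (Fintype.card β)
            = (-lam) ^ (Fintype.card β) := by
          rw [← neg_one_mul lam, mul_pow]
        rw [h1]
        exact pow_pos (by linarith) _
    · by_cases hmin : minimalEdges E = E
      swap
      · -- recurse on the Sperner subhypergraph
        have hsub : minimalEdges E ⊆ E := fun x hx => (mem_minimalEdges.mp hx).1
        have hlt : (minimalEdges E).card < E.card :=
          Finset.card_lt_card (HasSubset.Subset.ssubset_of_ne hsub hmin)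
        obtain ⟨q, hq1, hq2⟩ := ih (Fintype.card β + (minimalEdges E).card) (by omega)
          β (minimalEdges E) le_rfl (fun e heq => hne e (hsub heq)) (memL0_minimalEdges hne hE)
        refine ⟨q, ?_, hq2⟩
        intro k hk
        rw [hq1 k hk, countColorings_minimalEdges]
      · have hsp : ∀ a ∈ E, ∀ b ∈ E, a ⊆ b → a = b := by
          intro a ha b hb hab
          have hb' : b ∈ minimalEdges E := by rw [hmin]; exact hb
          exact (mem_minimalEdges.mp hb').2 a ha hab
        have hkey : ∀ e ∈ E, MemL0 (E.erase e) →
            MemL0 (minimalEdges (contractEdges E e)) → 2 ≤ e.card →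
            ∃ q : Polynomial ℝ, (∀ k : ℕ, 0 < k → q.eval (k : ℝ) = countColorings E k) ∧
              ∀ lam : ℝ, lam < 0 → 0 < (-1 : ℝ) ^ (Fintype.card β) * q.eval lam := by
          intro e heE hdel hcon hecard
          have hene := hne e heE
          have hEpos : 0 < E.card := Finset.card_pos.mpr hEne
          have herase := Finset.card_erase_of_mem heE
          -- deletion branch
          obtain ⟨q₁, hq₁, hq₁s⟩ := ih (Fintype.card β + (E.erase e).card)
            (by omega) β (E.erase e) le_rfl
            (fun e' he' => hne e' (Finset.mem_of_mem_erase he')) hdel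
          -- contraction branch
          have hcard' : Fintype.card (Option {v : β // v ∉ e})
              = Fintype.card β - e.card + 1 := card_option_compl e
          have hecard_le : e.card ≤ Fintype.card β := Finset.card_le_univ e
          have h1 : (minimalEdges (contractEdges E e)).card ≤ (contractEdges E e).card :=
            Finset.card_le_card (fun x hx => (mem_minimalEdges.mp hx).1)
          have h2 : (contractEdges E e).card ≤ (E.erase e).card := Finset.card_image_le
          have hmeas : Fintype.card (Option {v : β // v ∉ e})
              + (minimalEdges (contractEdges E e)).card < N := by omega
          obtain ⟨q₂, hq₂, hq₂s⟩ := ih _ hmeas (Option {v : β // v ∉ e})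
            (minimalEdges (contractEdges E e)) le_rfl
            (fun ε hε => contract_nonempty hne ε ((mem_minimalEdges.mp hε).1)) hcon
          refine ⟨q₁ - q₂, ?_, ?_⟩
          · intro k hk
            have hdc := countColorings_erase heE hene k
            have h4 : countColorings (minimalEdges (contractEdges E e)) k
                = countColorings (contractEdges E e) k := countColorings_minimalEdges _ k
            rw [Polynomial.eval_sub, hq₁ k hk, hq₂ k hk, h4, hdc]
            push_cast
            ring
          · intro lam hlam
            have hs₁ := hq₁s lam hlam
            have hs₂ := hq₂s lam hlam
            obtain ⟨c, hc⟩ := hE.1 e heE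
            have h5 : (-1 : ℝ) ^ (Fintype.card β - e.card + 1) * (-1) ^ e.card
                = (-1 : ℝ) ^ (Fintype.card β + 1) := by
              rw [← pow_add]
              congr 1
              omega
            have h6 : ((-1 : ℝ)) ^ e.card = 1 := Even.neg_one_pow ⟨c, hc⟩
            rw [h6, mul_one] at h5
            have h7 : (-1 : ℝ) ^ (Fintype.card (Option {v : β // v ∉ e}))
                = -((-1 : ℝ) ^ (Fintype.card β)) := by
              rw [hcard', h5, pow_succ]
              ring
            rw [h7] at hs₂
            have h8 : -((-1 : ℝ) ^ (Fintype.card β)) * q₂.eval lam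
                = -((-1 : ℝ) ^ (Fintype.card β) * q₂.eval lam) := by ring
            rw [h8] at hs₂
            rw [Polynomial.eval_sub, mul_sub]
            linarith
        by_cases hbig : ∃ e ∈ E, 4 ≤ e.card
        · obtain ⟨e, heE, he4⟩ := hbig
          exact hkey e heE (memL0_erase_of_big hE he4)
            (memL0_min_contract hne hE hsp heE he4) (by omega)
        · push_neg at hbig
          have h2 : ∀ e' ∈ E, e'.card = 2 := by
            intro e' he'
            obtain ⟨c, hc⟩ := hE.1 e' he'
            have h1 := Finset.card_pos.mpr (hne e' he')
            have := hbig e' he'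
            omega
          obtain ⟨e, heE⟩ := hEne
          refine hkey e heE ?_ ?_ (by rw [h2 e heE])
          · exact memL0_of_card_two (fun e' he' => h2 e' (Finset.mem_of_mem_erase he'))
          · exact memL0_minimalEdges (contract_nonempty hne)
              (memL0_of_card_two (contract_card_two h2 heE))

end MainProof

/-- If `H ∈ L0`, then `(-1)^{|V|} P(H, λ) > 0` for all real `λ < 0`. -/
theorem stmt0 {α : Type} [Fintype α] [DecidableEq α] (E : Finset (Finset α))
    (hne : ∀ e ∈ E, e.Nonempty) (hE : MemL0 E)
    (p : Polynomial ℝ)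
    (hp : ∀ k : ℕ, 0 < k → p.eval (k : ℝ) = countColorings E k)
    (lam : ℝ) (hlam : lam < 0) :
    0 < (-1 : ℝ) ^ (Fintype.card α) * p.eval lam := by
  obtain ⟨q, hq1, hq2⟩ := main_lemma (Fintype.card α + E.card) α E le_rfl hne hE
  have hpq : p = q := by
    apply Polynomial.eq_of_infinite_eval_eq
    apply Set.infinite_of_injective_forall_mem (f := fun n : ℕ => ((n + 1 : ℕ) : ℝ))
    · intro a b hab
      have : (a + 1 : ℕ) = (b + 1 : ℕ) := Nat.cast_injective hab
      omega
    · intro n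
      simp only [Set.mem_setOf_eq]
      rw [hp (n + 1) (Nat.succ_pos n), hq1 (n + 1) (Nat.succ_pos n)]
  rw [hpq]
  exact hq2 lam hlam
end

section
/- Let H = (V, E) be a hypergraph in the family L0'. Then for every real polynomial p such that for every positive integer k, p(k) equals the number of weak proper k-colorings of H, the number 0 is not a multiple root of p; that is, X² does not divide p. -/
open Finset Polynomial

variable {α : Type}

/-- The setoid identifying all the vertices of the edge `e`. -/
def edgeSetoid (e : Finset α) : Setoid α :=
  ⟨fun a b => a = b ∨ (a ∈ e ∧ b ∈ e), by
    constructor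
    · intro a; exact Or.inl rfl
    · rintro a b (rfl | ⟨h1, h2⟩); exacts [Or.inl rfl, Or.inr ⟨h2, h1⟩]
    · rintro a b c (rfl | ⟨h1, h2⟩) (rfl | ⟨h3, h4⟩)
      exacts [Or.inl rfl, Or.inr ⟨h3, h4⟩, Or.inr ⟨h1, h2⟩, Or.inr ⟨h1, h4⟩]⟩

lemma edgeSetoid_rel {e : Finset α} {a b : α} :
    edgeSetoid e a b ↔ a = b ∨ (a ∈ e ∧ b ∈ e) := Iff.rfl

lemma edgeSetoid_le_iff {e : Finset α} {Q : Setoid α} :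
    edgeSetoid e ≤ Q ↔ ∀ x ∈ e, ∀ y ∈ e, Q x y := by
  rw [Setoid.le_def]
  constructor
  · intro h x hx y hy; exact h (Or.inr ⟨hx, hy⟩)
  · rintro h x y (rfl | ⟨hx, hy⟩); exacts [Q.refl x, h x hx y hy]

lemma edgeSetoid_pair_le_iff [DecidableEq α] {a b : α} {Q : Setoid α} :
    edgeSetoid ({a, b} : Finset α) ≤ Q ↔ Q a b := by
  rw [edgeSetoid_le_iff]
  constructor
  · intro h; exact h a (by simp) b (by simp)
  · intro h x hx y hy
    simp only [Finset.mem_insert, Finset.mem_singleton] at hx hy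
    rcases hx with rfl | rfl <;> rcases hy with rfl | rfl
    exacts [Q.refl _, h, Q.symm h, Q.refl _]

/-- Characterization of the join of a setoid with an edge setoid. -/
lemma sup_edgeSetoid_rel (P : Setoid α) (s : Finset α) (a b : α) :
    (P ⊔ edgeSetoid s) a b ↔ P a b ∨ ((∃ u ∈ s, P a u) ∧ (∃ v ∈ s, P b v)) := by
  set Q : Setoid α := ⟨fun a b => P a b ∨ ((∃ u ∈ s, P a u) ∧ (∃ v ∈ s, P b v)), by
    constructor
    · intro a; exact Or.inl (P.refl a)
    · rintro a b (h | ⟨h1, h2⟩); exacts [Or.inl (P.symm h), Or.inr ⟨h2, h1⟩]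
    · rintro a b c hab hbc
      rcases hab with h | ⟨h1, h2⟩
      · rcases hbc with h' | ⟨⟨u, hu, h3⟩, h4⟩
        · exact Or.inl (P.trans h h')
        · exact Or.inr ⟨⟨u, hu, P.trans h h3⟩, h4⟩
      · rcases hbc with h' | ⟨⟨u, hu, h3⟩, h4⟩
        · obtain ⟨v, hv, hbv⟩ := h2
          exact Or.inr ⟨h1, ⟨v, hv, P.trans (P.symm h') hbv⟩⟩
        · exact Or.inr ⟨h1, h4⟩⟩ with hQ
  have hle : P ⊔ edgeSetoid s ≤ Q := by
    apply sup_le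
    · intro x y h; exact Or.inl h
    · rintro x y (rfl | ⟨hx, hy⟩)
      · exact Or.inl (P.refl x)
      · exact Or.inr ⟨⟨x, hx, P.refl x⟩, ⟨y, hy, P.refl y⟩⟩
  have hge : Q ≤ P ⊔ edgeSetoid s := by
    rintro x y (h | ⟨⟨u, hu, hxu⟩, ⟨v, hv, hyv⟩⟩)
    · exact le_sup_left (α := Setoid α) h
    · refine Setoid.trans' _ (le_sup_left (α := Setoid α) hxu) ?_
      refine Setoid.trans' _ (le_sup_right (α := Setoid α) (Or.inr ⟨hu, hv⟩ : edgeSetoid s u v)) ?_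
      exact le_sup_left (α := Setoid α) (P.symm hyv)
  exact ⟨fun h => hle h, fun h => hge h⟩

/-- Number of classes of a setoid. -/
noncomputable def nclasses (P : Setoid α) : ℕ := Nat.card (Quotient P)

lemma nclasses_top [Nonempty α] : nclasses (⊤ : Setoid α) = 1 := by
  rw [nclasses, Nat.card_eq_one_iff_unique]
  constructor
  · constructor
    intro a b
    induction a using Quotient.ind
    induction b using Quotient.ind
    exact Quotient.sound trivial
  · exact ⟨Quotient.mk _ (Classical.arbitrary α)⟩

lemma nclasses_eq_one_iff [Nonempty α] {P : Setoid α} : nclasses P = 1 ↔ P = ⊤ := by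
  constructor
  · intro h
    rw [nclasses, Nat.card_eq_one_iff_unique] at h
    obtain ⟨hs, _⟩ := h
    ext a b
    simp only [Setoid.top_def]
    constructor
    · intro _; trivial
    · intro _
      exact Quotient.exact (hs.elim (Quotient.mk P a) (Quotient.mk P b))
  · rintro rfl; exact nclasses_top

lemma nclasses_bot [Fintype α] : nclasses (⊥ : Setoid α) = Fintype.card α := by
  rw [nclasses]
  have : Quotient (⊥ : Setoid α) ≃ α := by
    refine ⟨Quotient.lift id ?_, Quotient.mk _, ?_, ?_⟩
    · intro a b h
      exact h
    · intro q; induction q using Quotient.ind; rfl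
    · intro a; rfl
  rw [Nat.card_congr this, Nat.card_eq_fintype_card]

/-- Merging two distinct classes decreases the number of classes by one. -/
lemma nclasses_sup_pair [Finite α] [DecidableEq α] {P : Setoid α} {x y : α} (h : ¬ P x y) :
    nclasses P = nclasses (P ⊔ edgeSetoid ({x, y} : Finset α)) + 1 := by
  classical
  set Q := P ⊔ edgeSetoid ({x, y} : Finset α) with hQdef
  have key : ∀ a b : α, Q a b ↔ P a b ∨ (P a x ∧ P b y) ∨ (P a y ∧ P b x) := by
    intro a b
    rw [hQdef]
    rw [sup_edgeSetoid_rel P ({x, y} : Finset α) a b]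
    constructor
    · rintro (h' | ⟨⟨u, hu, hau⟩, ⟨v, hv, hbv⟩⟩)
      · exact Or.inl h'
      · simp only [Finset.mem_insert, Finset.mem_singleton] at hu hv
        rcases hu with rfl | rfl <;> rcases hv with rfl | rfl
        · exact Or.inl (P.trans hau (P.symm hbv))
        · exact Or.inr (Or.inl ⟨hau, hbv⟩)
        · exact Or.inr (Or.inr ⟨hau, hbv⟩)
        · exact Or.inl (P.trans hau (P.symm hbv))
    · rintro (h' | ⟨h1, h2⟩ | ⟨h1, h2⟩)
      · exact Or.inl h'
      · exact Or.inr ⟨⟨x, by simp, h1⟩, ⟨y, by simp, h2⟩⟩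
      · exact Or.inr ⟨⟨y, by simp, h1⟩, ⟨x, by simp, h2⟩⟩
  -- the quotient by `P` splits as the class of `y` plus the rest; the rest maps bijectively
  -- to the quotient by `Q` ... rather: Quotient P ≃ {u : Quotient Q // ...}? Use subtype approach.
  have hPQ : P ≤ Q := le_sup_left
  let push : Quotient P → Quotient Q := Quotient.lift (Quotient.mk Q) (fun a b hab => Quotient.sound (hPQ hab))
  let yc : Quotient P := Quotient.mk P y
  have hbij : Function.Bijective (fun u : {u : Quotient P // u ≠ yc} => push u.1) := by
    constructor
    · rintro ⟨u, hu⟩ ⟨v, hv⟩ huv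
      induction u using Quotient.ind with | _ a =>
      induction v using Quotient.ind with | _ b =>
      simp only [push, Quotient.lift_mk] at huv
      have hab : Q a b := Quotient.exact huv
      rw [key] at hab
      rcases hab with h' | ⟨h1, h2⟩ | ⟨h1, h2⟩
      · exact Subtype.ext (Quotient.sound h')
      · exact absurd (Quotient.sound h2) hv
      · exact absurd (Quotient.sound h1) hu
    · intro w
      induction w using Quotient.ind with | _ c =>
      by_cases hc : P c y
      · refine ⟨⟨Quotient.mk P x, ?_⟩, ?_⟩
        · intro hxy
          exact h (Quotient.exact hxy)
        · simp only [push, Quotient.lift_mk]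
          exact Quotient.sound ((key x c).mpr (Or.inr (Or.inl ⟨P.refl x, hc⟩)))
      · exact ⟨⟨Quotient.mk P c, fun hcy => hc (Quotient.exact hcy)⟩, rfl⟩
  have h1 : Nat.card {u : Quotient P // u ≠ yc} = Nat.card (Quotient Q) := Nat.card_eq_of_bijective _ hbij
  have h2 : Nat.card (Quotient P) = Nat.card {u : Quotient P // u = yc} + Nat.card {u : Quotient P // ¬ u = yc} := by
    rw [← Nat.card_sum, Nat.card_congr (Equiv.sumCompl _)]
  have h3 : Nat.card {u : Quotient P // u = yc} = 1 := by
    rw [Nat.card_eq_one_iff_unique]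
    exact ⟨⟨fun a b => Subtype.ext (a.2.trans b.2.symm)⟩, ⟨⟨yc, rfl⟩⟩⟩
  rw [nclasses, nclasses, h2, h3, ← h1]
  ring

/-- The setoid generated by a set of edges: the join of the edge setoids. -/
def conSetoid (S : Finset (Finset α)) : Setoid α := S.sup edgeSetoid

lemma conSetoid_empty : conSetoid (∅ : Finset (Finset α)) = ⊥ := Finset.sup_empty

lemma conSetoid_insert [DecidableEq (Finset α)] (e : Finset α) (S : Finset (Finset α)) :
    conSetoid (insert e S) = edgeSetoid e ⊔ conSetoid S := Finset.sup_insert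

lemma conSetoid_union [DecidableEq (Finset α)] (S T : Finset (Finset α)) :
    conSetoid (S ∪ T) = conSetoid S ⊔ conSetoid T := Finset.sup_union

lemma edge_le_conSetoid {e : Finset α} {S : Finset (Finset α)} (he : e ∈ S) :
    edgeSetoid e ≤ conSetoid S := Finset.le_sup he

lemma conSetoid_mono {S T : Finset (Finset α)} (h : S ⊆ T) : conSetoid S ≤ conSetoid T :=
  Finset.sup_mono h

lemma edgeSetoid_singleton_le (x : α) (P : Setoid α) : edgeSetoid ({x} : Finset α) ≤ P := by
  intro a b hab
  rcases hab with rfl | ⟨ha, hb⟩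
  · exact P.refl a
  · simp only [Finset.mem_singleton] at ha hb
    rw [ha, hb]

lemma edgeSetoid_empty_le (P : Setoid α) : edgeSetoid (∅ : Finset α) ≤ P := by
  intro a b hab
  rcases hab with rfl | ⟨ha, _⟩
  · exact P.refl a
  · exact absurd ha (Finset.notMem_empty a)

lemma edgeSetoid_insert_eq [DecidableEq α] {x x₀ : α} {s : Finset α} (hx₀ : x₀ ∈ s) :
    edgeSetoid (insert x s) = edgeSetoid s ⊔ edgeSetoid ({x, x₀} : Finset α) := by
  apply le_antisymm
  · intro a b hab
    rcases hab with rfl | ⟨ha, hb⟩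
    · exact Setoid.refl' _ a
    · simp only [Finset.mem_insert] at ha hb
      have step : ∀ c, c = x ∨ c ∈ s → (edgeSetoid s ⊔ edgeSetoid ({x, x₀} : Finset α)) c x₀ := by
        rintro c (rfl | hc)
        · exact le_sup_right (α := Setoid α)
            (Or.inr ⟨Finset.mem_insert_self _ _, by simp⟩ : edgeSetoid ({c, x₀} : Finset α) c x₀)
        · exact le_sup_left (α := Setoid α) (Or.inr ⟨hc, hx₀⟩ : edgeSetoid s c x₀)
      exact Setoid.trans' _ (step a ha) (Setoid.symm' _ (step b hb))
  · apply sup_le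
    · intro a b hab
      rcases hab with rfl | ⟨ha, hb⟩
      · exact Setoid.refl' _ a
      · exact Or.inr ⟨Finset.mem_insert_of_mem ha, Finset.mem_insert_of_mem hb⟩
    · intro a b hab
      rcases hab with rfl | ⟨ha, hb⟩
      · exact Setoid.refl' _ a
      · simp only [Finset.mem_insert, Finset.mem_singleton] at ha hb
        have : ∀ c, c = x ∨ c = x₀ → c ∈ insert x s := by
          rintro c (rfl | rfl)
          · exact Finset.mem_insert_self _ _
          · exact Finset.mem_insert_of_mem hx₀
        exact Or.inr ⟨this a ha, this b hb⟩

/-- Merging an edge whose vertices are pairwise inequivalent. -/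
lemma nclasses_sup_edge [Finite α] [DecidableEq α] (s : Finset α) (P : Setoid α)
    (h : ∀ x ∈ s, ∀ y ∈ s, x ≠ y → ¬ P x y) :
    nclasses P = nclasses (P ⊔ edgeSetoid s) + (s.card - 1) := by
  classical
  induction s using Finset.induction_on generalizing P with
  | empty =>
      rw [sup_eq_left.mpr (edgeSetoid_empty_le P)]; simp
  | @insert x s hxs ih =>
      rcases Finset.eq_empty_or_nonempty s with rfl | ⟨x₀, hx₀⟩
      · rw [show (insert x (∅ : Finset α)) = {x} by rfl,
          sup_eq_left.mpr (edgeSetoid_singleton_le x P)]; simp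
      · have hpair : ∀ a ∈ s, ∀ b ∈ s, a ≠ b → ¬ P a b := fun a ha b hb =>
          h a (Finset.mem_insert_of_mem ha) b (Finset.mem_insert_of_mem hb)
        have hnotrel : ¬ (P ⊔ edgeSetoid s) x x₀ := by
          rw [sup_edgeSetoid_rel]
          rintro (h' | ⟨⟨u, hu, hxu⟩, -⟩)
          · exact h x (Finset.mem_insert_self _ _) x₀ (Finset.mem_insert_of_mem hx₀)
              (fun he => hxs (he ▸ hx₀)) h'
          · exact h x (Finset.mem_insert_self _ _) u (Finset.mem_insert_of_mem hu)
              (fun he => hxs (he ▸ hu)) hxu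
        have heq : P ⊔ edgeSetoid (insert x s)
            = (P ⊔ edgeSetoid s) ⊔ edgeSetoid ({x, x₀} : Finset α) := by
          rw [edgeSetoid_insert_eq hx₀, sup_assoc]
        have hq2 := nclasses_sup_pair hnotrel
        rw [ih P hpair, hq2, ← heq]
        have : 1 ≤ s.card := Finset.card_pos.mpr ⟨x₀, hx₀⟩
        rw [Finset.card_insert_of_notMem hxs]
        omega

open scoped Classical in
/-- Indicator that a setoid is the total one. -/
noncomputable def indTop (P : Setoid α) : ℤ := if P = ⊤ then 1 else 0

lemma indTop_of_top {P : Setoid α} (h : P = ⊤) : indTop P = 1 := if_pos h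
lemma indTop_of_ne {P : Setoid α} (h : P ≠ ⊤) : indTop P = 0 := if_neg h
lemma indTop_nonneg (P : Setoid α) : 0 ≤ indTop P := by
  unfold indTop; split <;> norm_num
lemma indTop_congr {P Q : Setoid α} (h : P = Q) : indTop P = indTop Q := by rw [h]

/-- The signed sum over subsets `T` of `D` of the indicator that `P` joined with `T` is total. -/
noncomputable def gsum (P : Setoid α) (D : Finset (Finset α)) : ℤ :=
  ∑ T ∈ D.powerset, (-1 : ℤ) ^ T.card * indTop (P ⊔ conSetoid T)

lemma loop_zero [DecidableEq (Finset α)] {P : Setoid α} {D : Finset (Finset α)} {d : Finset α}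
    (hd : d ∈ D) (hle : edgeSetoid d ≤ P) : gsum P D = 0 := by
  rw [gsum, ← Finset.insert_erase hd,
    Finset.sum_powerset_insert (Finset.notMem_erase d D)]
  have : ∀ T ∈ (D.erase d).powerset,
      (-1:ℤ) ^ (insert d T).card * indTop (P ⊔ conSetoid (insert d T))
      = - ((-1:ℤ) ^ T.card * indTop (P ⊔ conSetoid T)) := by
    intro T hT
    rw [Finset.mem_powerset] at hT
    have hdT : d ∉ T := fun hdT => Finset.notMem_erase d D (hT hdT)
    rw [Finset.card_insert_of_notMem hdT, conSetoid_insert]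
    have : P ⊔ (edgeSetoid d ⊔ conSetoid T) = P ⊔ conSetoid T := by
      rw [← sup_assoc, sup_eq_left.mpr hle]
    rw [this, pow_succ]
    ring
  rw [Finset.sum_congr rfl this]
  simp

lemma gsum_insert [DecidableEq (Finset α)] {P : Setoid α} {D' : Finset (Finset α)}
    {d : Finset α} (hd : d ∉ D') :
    gsum P (insert d D') = gsum P D' - gsum (P ⊔ edgeSetoid d) D' := by
  unfold gsum
  rw [Finset.sum_powerset_insert hd]
  have : ∀ T ∈ D'.powerset,
      (-1:ℤ) ^ (insert d T).card * indTop (P ⊔ conSetoid (insert d T))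
      = - ((-1:ℤ) ^ T.card * indTop ((P ⊔ edgeSetoid d) ⊔ conSetoid T)) := by
    intro T hT
    rw [Finset.mem_powerset] at hT
    have hdT : d ∉ T := fun hdT => hd (hT hdT)
    rw [Finset.card_insert_of_notMem hdT, conSetoid_insert, ← sup_assoc, pow_succ]
    ring
  rw [Finset.sum_congr rfl this, Finset.sum_neg_distrib]
  ring

lemma gsum_eq_zero_of_ne_top {P : Setoid α} {D : Finset (Finset α)}
    (h : P ⊔ conSetoid D ≠ ⊤) : gsum P D = 0 := by
  unfold gsum
  apply Finset.sum_eq_zero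
  intro T hT
  rw [Finset.mem_powerset] at hT
  have : P ⊔ conSetoid T ≠ ⊤ := by
    intro he
    have hle : P ⊔ conSetoid T ≤ P ⊔ conSetoid D := sup_le_sup_left (conSetoid_mono hT) P
    rw [he] at hle
    exact h (top_le_iff.mp hle)
  rw [indTop_of_ne this, mul_zero]

/-- The key sign lemma for sums over sets of `2`-element edges. -/
lemma pair_lemma [Finite α] [DecidableEq α] [Nonempty α] :
    ∀ (N : ℕ) (D : Finset (Finset α)) (P : Setoid α), D.card ≤ N →
    (∀ d ∈ D, ∃ x y : α, x ≠ y ∧ d = {x, y}) →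
    (∀ d ∈ D, ¬ edgeSetoid d ≤ P) →
    P ⊔ conSetoid D = ⊤ →
    1 ≤ (-1 : ℤ) ^ (nclasses P + 1) * gsum P D := by
  classical
  have base : ∀ (P : Setoid α), P ⊔ conSetoid (∅ : Finset (Finset α)) = ⊤ →
      1 ≤ (-1 : ℤ) ^ (nclasses P + 1) * gsum P (∅ : Finset (Finset α)) := by
    intro P htot
    rw [conSetoid_empty, sup_bot_eq] at htot
    subst htot
    have h1 : gsum (⊤ : Setoid α) ∅ = 1 := by
      unfold gsum
      rw [Finset.powerset_empty, Finset.sum_singleton]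
      rw [indTop_of_top (by simp [conSetoid_empty])]
      simp
    rw [nclasses_top, h1]
    norm_num
  intro N
  induction N with
  | zero =>
      intro D P hcard hpairs hloop htot
      have hD : D = ∅ := Finset.card_eq_zero.mp (Nat.le_zero.mp hcard)
      subst hD
      exact base P htot
  | succ n ih =>
      intro D P hcard hpairs hloop htot
      rcases D.eq_empty_or_nonempty with rfl | ⟨d, hd⟩
      · exact base P htot
      set D' := D.erase d with hD'
      have hdD' : d ∉ D' := Finset.notMem_erase d D
      have hins : D = insert d D' := (Finset.insert_erase hd).symm
      have hcard' : D'.card ≤ n := by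
        rw [hD', Finset.card_erase_of_mem hd]
        have hpos : 1 ≤ D.card := Finset.card_pos.mpr ⟨d, hd⟩
        omega
      have hpairs' : ∀ d' ∈ D', ∃ x y : α, x ≠ y ∧ d' = {x, y} :=
        fun d' hd' => hpairs d' (Finset.mem_of_mem_erase hd')
      have hloop' : ∀ d' ∈ D', ¬ edgeSetoid d' ≤ P :=
        fun d' hd' => hloop d' (Finset.mem_of_mem_erase hd')
      obtain ⟨x, y, hxy, hdxy⟩ := hpairs d hd
      have htot' : (P ⊔ edgeSetoid d) ⊔ conSetoid D' = ⊤ := by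
        rw [sup_assoc, ← conSetoid_insert, ← hins]; exact htot
      have hrec : gsum P D = gsum P D' - gsum (P ⊔ edgeSetoid d) D' := by
        rw [hins]; exact gsum_insert hdD'
      by_cases hL : ∃ d' ∈ D', edgeSetoid d' ≤ P ⊔ edgeSetoid d
      · -- a parallel pair exists: the contraction term vanishes
        obtain ⟨d', hd'D', hled'⟩ := hL
        have hzero : gsum (P ⊔ edgeSetoid d) D' = 0 := loop_zero hd'D' hled'
        obtain ⟨x', y', hxy', hd'xy⟩ := hpairs' d' hd'D'
        have hnd' : ¬ P x' y' := by
          intro hP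
          exact hloop' d' hd'D' (by rw [hd'xy]; exact edgeSetoid_pair_le_iff.mpr hP)
        -- `edge d ≤ P ⊔ edge d'`
        have hrel : (P ⊔ edgeSetoid ({x, y} : Finset α)) x' y' := by
          have := hled'
          rw [hd'xy, hdxy] at this
          exact edgeSetoid_pair_le_iff.mp this
        rw [sup_edgeSetoid_rel] at hrel
        have hdle : edgeSetoid d ≤ P ⊔ edgeSetoid d' := by
          rw [hdxy, hd'xy, edgeSetoid_pair_le_iff]
          rcases hrel with hP | ⟨⟨u, hu, hxu⟩, ⟨v, hv, hyv⟩⟩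
          · exact absurd hP hnd'
          · have huv : u ≠ v := by
              rintro rfl
              exact hnd' (Setoid.trans' P hxu (Setoid.symm' P hyv))
            have hrelxy' : (P ⊔ edgeSetoid ({x', y'} : Finset α)) u v := by
              refine Setoid.trans' _ (le_sup_left (α := Setoid α) (Setoid.symm' P hxu)) ?_
              refine Setoid.trans' _ (le_sup_right (α := Setoid α)
                (Or.inr ⟨by simp, by simp⟩ : edgeSetoid ({x', y'} : Finset α) x' y')) ?_
              exact le_sup_left (α := Setoid α) hyv
            simp only [Finset.mem_insert, Finset.mem_singleton] at hu hv
            rcases hu with rfl | rfl <;> rcases hv with rfl | rfl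
            · exact absurd rfl huv
            · exact hrelxy'
            · exact Setoid.symm' _ hrelxy'
            · exact absurd rfl huv
        have htotD' : P ⊔ conSetoid D' = ⊤ := by
          apply top_le_iff.mp
          rw [← htot']
          apply sup_le
          · apply sup_le le_sup_left
            exact le_trans hdle (sup_le_sup_left (edge_le_conSetoid hd'D') P)
          · exact le_sup_right
        have := ih D' P hcard' hpairs' hloop' htotD'
        rw [hrec, hzero, sub_zero]
        exact this
      · push_neg at hL
        have hndP : ¬ P x y := by
          intro hP
          exact hloop d hd (by rw [hdxy]; exact edgeSetoid_pair_le_iff.mpr hP)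
        have hm : nclasses P = nclasses (P ⊔ edgeSetoid d) + 1 := by
          rw [hdxy]; exact nclasses_sup_pair hndP
        have term2 := ih D' (P ⊔ edgeSetoid d) hcard' hpairs' hL htot'
        have term1 : 0 ≤ (-1 : ℤ) ^ (nclasses P + 1) * gsum P D' := by
          by_cases htD' : P ⊔ conSetoid D' = ⊤
          · exact le_trans zero_le_one (ih D' P hcard' hpairs' hloop' htD')
          · rw [gsum_eq_zero_of_ne_top htD', mul_zero]
        have hsign : (-1 : ℤ) ^ (nclasses P + 1)
            = -((-1 : ℤ) ^ (nclasses (P ⊔ edgeSetoid d) + 1)) := by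
          rw [hm, pow_succ]
          ring
        rw [hrec]
        rw [mul_sub]
        rw [hsign] at term1 ⊢
        linarith

/-- One step of connectivity along edges of `F`. -/
def stepRel (F : Finset (Finset α)) (a b : α) : Prop := ∃ e ∈ F, a ∈ e ∧ b ∈ e

lemma stepRel_symm {F : Finset (Finset α)} : Symmetric (stepRel F) := by
  rintro a b ⟨e, he, h1, h2⟩; exact ⟨e, he, h2, h1⟩

lemma conSetoid_rel_iff_rtg {F : Finset (Finset α)} {x y : α} :
    conSetoid F x y ↔ Relation.ReflTransGen (stepRel F) x y := by
  constructor
  · intro h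
    let Q : Setoid α := ⟨Relation.ReflTransGen (stepRel F),
      ⟨fun a => Relation.ReflTransGen.refl,
       fun h => (@Relation.ReflTransGen.stdSymm _ _ ⟨fun a b hab => stepRel_symm hab⟩).symm _ _ h,
       fun h1 h2 => Relation.ReflTransGen.trans h1 h2⟩⟩
    have hle : conSetoid F ≤ Q := by
      apply Finset.sup_le
      intro e he
      rintro a b (rfl | ⟨ha, hb⟩)
      · exact Relation.ReflTransGen.refl
      · exact Relation.ReflTransGen.single ⟨e, he, ha, hb⟩
    exact hle h
  · intro h
    induction h with
    | refl => exact Setoid.refl' _ x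
    | tail hab hbc ih =>
        obtain ⟨e, he, h1, h2⟩ := hbc
        exact Setoid.trans' _ ih (edge_le_conSetoid he (Or.inr ⟨h1, h2⟩))

/-- Chains of edges witnessing connectivity. -/
def IsChain' (F : Finset (Finset α)) (x y : α) (m : ℕ) (z : ℕ → α) (e : ℕ → Finset α) : Prop :=
  z 0 = x ∧ z m = y ∧ ∀ i < m, e i ∈ F ∧ z i ∈ e i ∧ z (i + 1) ∈ e i

lemma chain_of_rtg {F : Finset (Finset α)} {x y : α}
    (h : Relation.ReflTransGen (stepRel F) x y) :
    ∃ m z e, IsChain' F x y m z e := by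
  induction h with
  | refl => exact ⟨0, fun _ => x, fun _ => ∅, rfl, rfl, fun i hi => absurd hi (Nat.not_lt_zero i)⟩
  | @tail b c hab hbc ih =>
      obtain ⟨m, z, e, h0, hm, hs⟩ := ih
      obtain ⟨f, hfF, hbf, hcf⟩ := hbc
      refine ⟨m + 1, fun i => if i ≤ m then z i else c, fun i => if i < m then e i else f,
        ?_, ?_, ?_⟩
      · simp [Nat.zero_le m, h0]
      · simp
      · intro i hi
        rcases Nat.lt_or_ge i m with him | him
        · have h1 : i ≤ m := le_of_lt him
          have h2 : i + 1 ≤ m := him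
          obtain ⟨he, hz1, hz2⟩ := hs i him
          simp only [if_pos h1, if_pos h2, if_pos him]
          exact ⟨he, hz1, hz2⟩
        · have hieq : i = m := by omega
          subst hieq
          simp only [if_neg (lt_irrefl i), if_pos (le_refl i), if_neg (by omega : ¬ i + 1 ≤ i)]
          exact ⟨hfF, hm ▸ hbf, hcf⟩


/-- A minimal chain has distinct vertices and distinct edges. -/
lemma min_chain {F : Finset (Finset α)} {x y : α} (hxy : x ≠ y)
    (h : Relation.ReflTransGen (stepRel F) x y) :
    ∃ m z e, IsChain' F x y m z e ∧ 1 ≤ m ∧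
      (∀ i j, i < j → j ≤ m → z i ≠ z j) ∧
      (∀ i j, i < j → j < m → e i ≠ e j) := by
  classical
  have hex : ∃ m, ∃ z e, IsChain' F x y m z e := chain_of_rtg h
  obtain ⟨z, e, hch⟩ := Nat.find_spec hex
  set m₀ := Nat.find hex with hm₀def
  obtain ⟨h0, hm, hs⟩ := hch
  have hm1 : 1 ≤ m₀ := by
    rcases Nat.eq_zero_or_pos m₀ with h' | h'
    · exact absurd (h0.symm.trans (h' ▸ hm)) hxy
    · exact h'
  refine ⟨m₀, z, e, ⟨h0, hm, hs⟩, hm1, ?_, ?_⟩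
  · -- distinct vertices
    intro i j hij hjm heq
    set k := j - i with hk
    have hk1 : 1 ≤ k := by omega
    have hik : i + k = j := by omega
    have hcut : ∃ z' e', IsChain' F x y (m₀ - k) z' e' := by
      refine ⟨fun t => if t ≤ i then z t else z (t + k),
        fun t => if t < i then e t else e (t + k), by simp [h0], ?_, ?_⟩
      · rcases Nat.lt_or_ge i (m₀ - k) with hi' | hi'
        · have hn : ¬ (m₀ - k ≤ i) := by omega
          simp only [if_neg hn]
          rw [show m₀ - k + k = m₀ by omega, hm]
        · have hieq : m₀ - k = i := by omega
          have hjeq : j = m₀ := by omega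
          simp only [hieq, if_pos (le_refl i)]
          rw [heq, hjeq, hm]
      · intro t ht
        rcases Nat.lt_or_ge t i with hti | hti
        · obtain ⟨he, hz1, hz2⟩ := hs t (by omega)
          simp only [if_pos (le_of_lt hti), if_pos (show t + 1 ≤ i from hti), if_pos hti]
          exact ⟨he, hz1, hz2⟩
        · have hnt : ¬ t < i := by omega
          have hn1 : ¬ t + 1 ≤ i := by omega
          have hstep : t + k < m₀ := by omega
          obtain ⟨he, hz1, hz2⟩ := hs (t + k) hstep
          simp only [if_neg hnt, if_neg hn1]
          refine ⟨he, ?_, by rw [show t + 1 + k = t + k + 1 by ring]; exact hz2⟩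
          rcases Nat.eq_or_lt_of_le hti with hteq | htlt
          · simp only [if_pos (le_of_eq hteq.symm)]
            rw [← hteq, hik, heq]
            exact (hs j (by omega)).2.1
          · simp only [if_neg (by omega : ¬ t ≤ i)]
            exact hz1
    exact Nat.find_min hex (by omega : m₀ - k < m₀) hcut
  · -- distinct edges
    intro i j hij hjm heq
    set k := j - i with hk
    have hk1 : 1 ≤ k := by omega
    have hik : i + k = j := by omega
    have hcut : ∃ z' e', IsChain' F x y (m₀ - k) z' e' := by
      refine ⟨fun t => if t ≤ i then z t else z (t + k),
        fun t => if t < i then e t else e (t + k), by simp [h0], ?_, ?_⟩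
      · have hn : ¬ (m₀ - k ≤ i) := by omega
        simp only [if_neg hn]
        rw [show m₀ - k + k = m₀ by omega, hm]
      · intro t ht
        rcases Nat.lt_or_ge t i with hti | hti
        · obtain ⟨he, hz1, hz2⟩ := hs t (by omega)
          simp only [if_pos (le_of_lt hti), if_pos (show t + 1 ≤ i from hti), if_pos hti]
          exact ⟨he, hz1, hz2⟩
        · have hnt : ¬ t < i := by omega
          have hn1 : ¬ t + 1 ≤ i := by omega
          have hstep : t + k < m₀ := by omega
          obtain ⟨he, hz1, hz2⟩ := hs (t + k) hstep
          simp only [if_neg hnt, if_neg hn1]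
          refine ⟨he, ?_, by rw [show t + 1 + k = t + k + 1 by ring]; exact hz2⟩
          rcases Nat.eq_or_lt_of_le hti with hteq | htlt
          · -- t = i : use e i = e j
            obtain ⟨he', hz1', _⟩ := hs i (by omega)
            simp only [if_pos (le_of_eq hteq.symm)]
            rw [← hteq, hik, ← heq]
            exact hz1'
          · simp only [if_neg (by omega : ¬ t ≤ i)]
            exact hz1
    exact Nat.find_min hex (by omega : m₀ - k < m₀) hcut

/-- From a closing edge `f` and connectivity within `F` avoiding `f`, the cycle condition of
`L0` produces an edge of cardinality two joining two vertices connected to the cycle. -/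
lemma exists_pair_of_rel [DecidableEq α] {E F : Finset (Finset α)} {f : Finset α}
    (hE0 : MemL0 E) (hFE : F ⊆ E) (hfE : f ∈ E) (hfF : f ∉ F)
    {x y : α} (hxy : x ≠ y) (hxf : x ∈ f) (hyf : y ∈ f)
    (hrel : conSetoid F x y) :
    ∃ a b : α, a ≠ b ∧ ({a, b} : Finset α) ∈ E ∧ conSetoid (insert f F) a b := by
  rw [conSetoid_rel_iff_rtg] at hrel
  obtain ⟨m, z, e, ⟨h0, hm, hs⟩, hm1, hzd, hed⟩ := min_chain hxy hrel
  set t := m + 1 with htdef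
  haveI : NeZero t := ⟨by omega⟩
  haveI : Fact (1 < t) := ⟨by omega⟩
  have hvallt : ∀ i : ZMod t, (ZMod.val i) ≤ m := fun i => by
    have := ZMod.val_lt i; omega
  have hvaladd : ∀ i : ZMod t, (ZMod.val (i + 1)) = if ZMod.val i = m then 0 else ZMod.val i + 1 := by
    intro i
    rw [ZMod.val_add, ZMod.val_one]
    rcases Nat.eq_or_lt_of_le (hvallt i) with h' | h'
    · rw [if_pos h', h']
      simp [htdef]
    · rw [if_neg (by omega)]
      exact Nat.mod_eq_of_lt (by omega)
  set v : ZMod t → α := fun i => z (ZMod.val i) with hvdef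
  set es : ZMod t → Finset α := fun i => if ZMod.val i < m then e (ZMod.val i) else f with hesdef
  have hcyc : IsCycle E t v es := by
    refine ⟨by omega, ?_, ?_, ?_, ?_⟩
    · -- injectivity of v
      intro i j hij
      simp only [hvdef] at hij
      by_contra hne
      have hvne : ZMod.val i ≠ ZMod.val j := fun hv => hne (ZMod.val_injective t hv)
      rcases Nat.lt_or_ge (ZMod.val i) (ZMod.val j) with h' | h'
      · exact hzd _ _ h' (hvallt j) hij
      · exact hzd _ _ (by omega) (hvallt i) hij.symm
    · -- injectivity of es
      intro i j hij
      simp only [hesdef] at hij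
      by_cases hi : ZMod.val i < m <;> by_cases hj : ZMod.val j < m
      · rw [if_pos hi, if_pos hj] at hij
        by_contra hne
        have hvne : ZMod.val i ≠ ZMod.val j := fun hv => hne (ZMod.val_injective t hv)
        rcases Nat.lt_or_ge (ZMod.val i) (ZMod.val j) with h' | h'
        · exact hed _ _ h' hj hij
        · exact hed _ _ (by omega) hi hij.symm
      · rw [if_pos hi, if_neg hj] at hij
        exact absurd (hij ▸ (hs _ hi).1) hfF
      · rw [if_neg hi, if_pos hj] at hij
        exact absurd (hij.symm ▸ (hs _ hj).1) hfF
      · apply ZMod.val_injective t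
        have hvi := hvallt i
        have hvj := hvallt j
        omega
    · intro i
      simp only [hesdef]
      split
      · exact hFE (hs _ (by assumption)).1
      · exact hfE
    · intro i
      constructor
      · simp only [hvdef, hesdef]
        split
        · exact (hs _ (by assumption)).2.1
        · have : ZMod.val i = m := by have := hvallt i; omega
          rw [this, hm]
          exact hyf
      · simp only [hvdef, hesdef, hvaladd i]
        by_cases hi : ZMod.val i = m
        · rw [hi, if_pos rfl, if_neg (lt_irrefl m), h0]
          exact hxf
        · have hi' : ZMod.val i < m := lt_of_le_of_ne (hvallt i) hi
          rw [if_neg hi, if_pos hi']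
          exact (hs _ hi').2.2
  obtain ⟨a, b, hab, ⟨i, hai⟩, ⟨j, hbj⟩, hpE⟩ := hE0.2 t v es hcyc
  refine ⟨a, b, hab, hpE, ?_⟩
  -- each vertex of a cycle edge is related to x in `insert f F`
  have hFle : conSetoid F ≤ conSetoid (insert f F) := conSetoid_mono (Finset.subset_insert f F)
  have hzx : ∀ n, n ≤ m → conSetoid (insert f F) (z n) x := by
    intro n
    induction n with
    | zero => intro _; rw [h0]
    | succ n ihn =>
        intro hn
        have hn' : n < m := by omega
        have hstep : conSetoid (insert f F) (z (n+1)) (z n) :=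
          edge_le_conSetoid (Finset.mem_insert_of_mem (hs n hn').1)
            (Or.inr ⟨(hs n hn').2.2, (hs n hn').2.1⟩)
        exact Setoid.trans' _ hstep (ihn (by omega))
  have hvert : ∀ (i : ZMod t) (w : α), w ∈ es i → conSetoid (insert f F) w x := by
    intro i w hw
    have hesmem : es i ∈ insert f F := by
      simp only [hesdef]
      split
      · exact Finset.mem_insert_of_mem (hs _ (by assumption)).1
      · exact Finset.mem_insert_self f F
    have hstep : conSetoid (insert f F) w (v i) :=
      edge_le_conSetoid hesmem (Or.inr ⟨hw, by
        simp only [hvdef, hesdef]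
        split
        · exact (hs _ (by assumption)).2.1
        · have : ZMod.val i = m := by have := hvallt i; omega
          rw [this, hm]; exact hyf⟩)
    refine Setoid.trans' _ hstep ?_
    simp only [hvdef]
    exact hzx _ (hvallt i)
  exact Setoid.trans' _ (hvert i a hai) (Setoid.symm' _ (hvert j b hbj))

/-- Parity: for a loop-free family of even edges, the number of classes of the generated
setoid has the parity of `|V| - |F|`. -/
lemma parity_lemma [Fintype α] [DecidableEq α] {E : Finset (Finset α)}
    (hE0 : MemL0 E) (hne : ∀ e ∈ E, e.Nonempty) :
    ∀ (N : ℕ) (F : Finset (Finset α)), F.card ≤ N → F ⊆ E →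
    (∀ a b : α, a ≠ b → ({a, b} : Finset α) ∈ E → ¬ conSetoid F a b) →
    (-1 : ℤ) ^ (F.card + nclasses (conSetoid F)) = (-1 : ℤ) ^ (Fintype.card α) := by
  intro N
  induction N with
  | zero =>
      intro F hcard _ _
      have hF : F = ∅ := Finset.card_eq_zero.mp (Nat.le_zero.mp hcard)
      subst hF
      rw [conSetoid_empty, nclasses_bot]
      simp
  | succ n ih =>
      intro F hcard hFE hloopfree
      rcases F.eq_empty_or_nonempty with rfl | ⟨f, hf⟩
      · rw [conSetoid_empty, nclasses_bot]; simp
      set F' := F.erase f with hF'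
      have hff' : f ∉ F' := Finset.notMem_erase f F
      have hins : insert f F' = F := Finset.insert_erase hf
      have hF'E : F' ⊆ E := fun e he => hFE (Finset.mem_of_mem_erase he)
      have hcard' : F'.card ≤ n := by
        rw [hF', Finset.card_erase_of_mem hf]
        have : 1 ≤ F.card := Finset.card_pos.mpr ⟨f, hf⟩
        omega
      have hloopfree' : ∀ a b : α, a ≠ b → ({a, b} : Finset α) ∈ E → ¬ conSetoid F' a b :=
        fun a b hab hmem hrel => hloopfree a b hab hmem
          (conSetoid_mono (Finset.erase_subset f F) hrel)
      -- vertices of f are pairwise inequivalent under `conSetoid F'`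
      have hpairwise : ∀ x ∈ f, ∀ y ∈ f, x ≠ y → ¬ conSetoid F' x y := by
        intro x hx y hy hxy hrel
        obtain ⟨a, b, hab, habE, habrel⟩ :=
          exists_pair_of_rel hE0 hF'E (hFE hf) hff' hxy hx hy hrel
        rw [hins] at habrel
        exact hloopfree a b hab habE habrel
      have hmerge : nclasses (conSetoid F')
          = nclasses (conSetoid F' ⊔ edgeSetoid f) + (f.card - 1) :=
        nclasses_sup_edge f (conSetoid F') hpairwise
      have hconF : conSetoid F = conSetoid F' ⊔ edgeSetoid f := by
        rw [← hins, conSetoid_insert, sup_comm]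
      have hfeven : Even f.card := hE0.1 f (hFE hf)
      have hfpos : 1 ≤ f.card := Finset.card_pos.mpr (hne f (hFE hf))
      have hodd : Odd (f.card - 1) := by
        obtain ⟨k, hk⟩ := hfeven
        exact ⟨k - 1, by omega⟩
      have hFcard : F.card = F'.card + 1 := by
        rw [hF', Finset.card_erase_of_mem hf]
        have : 1 ≤ F.card := Finset.card_pos.mpr ⟨f, hf⟩
        omega
      have hIH := ih F' hcard' hF'E hloopfree'
      rw [hmerge] at hIH
      rw [hconF, hFcard]
      rw [show F'.card + 1 + nclasses (conSetoid F' ⊔ edgeSetoid f)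
            = (F'.card + nclasses (conSetoid F' ⊔ edgeSetoid f)) + 1 by ring]
      rw [show F'.card + (nclasses (conSetoid F' ⊔ edgeSetoid f) + (f.card - 1))
            = (F'.card + nclasses (conSetoid F' ⊔ edgeSetoid f)) + (f.card - 1) by ring] at hIH
      rw [pow_add] at hIH ⊢
      rw [hodd.neg_one_pow] at hIH
      rw [pow_one]
      exact hIH

lemma bot_rel_eq {a b : α} (h : (⊥ : Setoid α) a b) : a = b :=
  (bot_le (a := Setoid.ker (id : α → α))) h

/-- The main sign estimate for hypergraphs in `L0'`. -/
theorem main_sign [Fintype α] [DecidableEq α] {E : Finset (Finset α)}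
    (hne : ∀ e ∈ E, e.Nonempty) (hE : MemL0' E) :
    1 ≤ (-1 : ℤ) ^ (Fintype.card α + 1) *
      ∑ S ∈ E.powerset, (-1 : ℤ) ^ S.card * indTop (conSetoid S) := by
  classical
  obtain ⟨hE0, hconn⟩ := hE
  haveI hα : Nonempty α := hconn.nonempty
  set n := Fintype.card α with hn
  set E₂ := E.filter (fun e => e.card = 2) with hE₂
  set B := E.filter (fun e => ¬ e.card = 2) with hB
  have hBE : B ⊆ E := Finset.filter_subset _ E
  have hE₂E : E₂ ⊆ E := Finset.filter_subset _ E
  have hdisj : Disjoint E₂ B := Finset.disjoint_filter_filter_not E E _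
  have hunion : E₂ ∪ B = E := Finset.filter_union_filter_not_eq _ E
  -- total connectivity through the 2-element edges
  have hwalk : ∀ a b : α, (pairGraph E₂).Walk a b → conSetoid E₂ a b := by
    intro a b w
    induction w with
    | nil => exact Setoid.refl' _ _
    | cons hadj w' ih =>
        obtain ⟨huv, hmem⟩ := hadj
        exact Setoid.trans' _ (edge_le_conSetoid hmem (Or.inr ⟨by simp, by simp⟩)) ih
  have htot2 : conSetoid E₂ = ⊤ := by
    rw [eq_top_iff]
    intro a b _
    obtain ⟨w⟩ := hconn.preconnected a b
    exact hwalk a b w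
  -- reindex the sum over subsets of `E` by pairs of subsets of `B` and `E₂`
  have hre : ∑ S ∈ E.powerset, (-1 : ℤ) ^ S.card * indTop (conSetoid S)
      = ∑ F ∈ B.powerset, (-1 : ℤ) ^ F.card * gsum (conSetoid F) E₂ := by
    rw [show ∑ F ∈ B.powerset, (-1 : ℤ) ^ F.card * gsum (conSetoid F) E₂
        = ∑ q ∈ B.powerset ×ˢ E₂.powerset,
            (-1 : ℤ) ^ (q.1 ∪ q.2).card * indTop (conSetoid (q.1 ∪ q.2)) by
      rw [Finset.sum_product]
      apply Finset.sum_congr rfl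
      intro F hF
      rw [Finset.mem_powerset] at hF
      rw [gsum, Finset.mul_sum]
      apply Finset.sum_congr rfl
      intro T hT
      rw [Finset.mem_powerset] at hT
      have hdFT : Disjoint F T :=
        Finset.disjoint_of_subset_left hF (Finset.disjoint_of_subset_right hT hdisj.symm)
      rw [Finset.card_union_of_disjoint hdFT, conSetoid_union, pow_add]
      ring]
    apply Finset.sum_nbij' (fun S => (S ∩ B, S ∩ E₂)) (fun q => q.1 ∪ q.2)
    · intro S hS
      rw [Finset.mem_powerset] at hS
      rw [Finset.mem_product]
      exact ⟨Finset.mem_powerset.mpr Finset.inter_subset_right,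
        Finset.mem_powerset.mpr Finset.inter_subset_right⟩
    · intro q hq
      rw [Finset.mem_product, Finset.mem_powerset, Finset.mem_powerset] at hq
      rw [Finset.mem_powerset]
      exact Finset.union_subset (hq.1.trans hBE) (hq.2.trans hE₂E)
    · intro S hS
      rw [Finset.mem_powerset] at hS
      simp only
      rw [← Finset.inter_union_distrib_left]
      rw [show B ∪ E₂ = E from (Finset.union_comm _ _).trans hunion]
      exact Finset.inter_eq_left.mpr hS
    · intro q hq
      rw [Finset.mem_product, Finset.mem_powerset, Finset.mem_powerset] at hq
      have h1 : (q.1 ∪ q.2) ∩ B = q.1 := by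
        rw [Finset.union_inter_distrib_right, Finset.inter_eq_left.mpr hq.1,
          Finset.disjoint_iff_inter_eq_empty.mp (Finset.disjoint_of_subset_left hq.2 hdisj),
          Finset.union_empty]
      have h2 : (q.1 ∪ q.2) ∩ E₂ = q.2 := by
        rw [Finset.union_inter_distrib_right, Finset.inter_eq_left.mpr hq.2,
          Finset.disjoint_iff_inter_eq_empty.mp (Finset.disjoint_of_subset_left hq.1 hdisj.symm),
          Finset.empty_union]
      exact Prod.ext h1 h2
    · intro S hS
      simp only
      rw [← Finset.inter_union_distrib_left]
      rw [show B ∪ E₂ = E from (Finset.union_comm _ _).trans hunion]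
      rw [Finset.inter_eq_left.mpr (Finset.mem_powerset.mp hS)]
  -- pointwise sign analysis
  have key : ∀ F ∈ B.powerset,
      (∀ a b : α, a ≠ b → ({a, b} : Finset α) ∈ E → ¬ conSetoid F a b) →
      1 ≤ (-1 : ℤ) ^ (n + 1) * ((-1 : ℤ) ^ F.card * gsum (conSetoid F) E₂) := by
    intro F hF hloopfree
    rw [Finset.mem_powerset] at hF
    have hFE : F ⊆ E := hF.trans hBE
    have hpar := parity_lemma hE0 hne F.card F le_rfl hFE hloopfree
    have hpairs : ∀ d ∈ E₂, ∃ x y : α, x ≠ y ∧ d = {x, y} := by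
      intro d hd
      rw [hE₂, Finset.mem_filter] at hd
      exact Finset.card_eq_two.mp hd.2
    have hloopless : ∀ d ∈ E₂, ¬ edgeSetoid d ≤ conSetoid F := by
      intro d hd hled
      obtain ⟨x, y, hxy, rfl⟩ := hpairs d hd
      exact hloopfree x y hxy (hE₂E hd) (edgeSetoid_pair_le_iff.mp hled)
    have htotF : conSetoid F ⊔ conSetoid E₂ = ⊤ := by rw [htot2, sup_top_eq]
    have hpairle := pair_lemma E₂.card E₂ (conSetoid F) le_rfl hpairs hloopless htotF
    set m := nclasses (conSetoid F) with hm
    have hsq : ((-1 : ℤ)) ^ F.card * (-1) ^ F.card = 1 := by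
      rw [← pow_add]
      exact Even.neg_one_pow ⟨F.card, rfl⟩
    have hsign : (-1 : ℤ) ^ (n + 1) * (-1) ^ F.card = (-1) ^ (m + 1) := by
      calc (-1 : ℤ) ^ (n + 1) * (-1) ^ F.card
          = ((-1 : ℤ) ^ n * (-1)) * (-1) ^ F.card := by rw [pow_succ]
        _ = (((-1 : ℤ) ^ F.card * (-1) ^ m) * (-1)) * (-1) ^ F.card := by
              rw [← hpar, pow_add]
        _ = ((-1 : ℤ) ^ F.card * (-1) ^ F.card) * ((-1) ^ m * (-1)) := by ring
        _ = (-1 : ℤ) ^ m * (-1) := by rw [hsq, one_mul]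
        _ = (-1 : ℤ) ^ (m + 1) := by rw [pow_succ]
    rw [← mul_assoc, hsign]
    exact hpairle
  rw [hre, Finset.mul_sum]
  have hterm0 : 1 ≤ (-1 : ℤ) ^ (n + 1) * ((-1 : ℤ) ^ (∅ : Finset (Finset α)).card
      * gsum (conSetoid (∅ : Finset (Finset α))) E₂) := by
    apply key ∅ (Finset.mem_powerset.mpr (Finset.empty_subset B))
    intro a b hab _ hrel
    rw [conSetoid_empty] at hrel
    exact hab (bot_rel_eq hrel)
  have hnonneg : ∀ F ∈ B.powerset,
      0 ≤ (-1 : ℤ) ^ (n + 1) * ((-1 : ℤ) ^ F.card * gsum (conSetoid F) E₂) := by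
    intro F hF
    by_cases hloop : ∃ a b : α, a ≠ b ∧ ({a, b} : Finset α) ∈ E ∧ conSetoid F a b
    · obtain ⟨a, b, hab, habE, habrel⟩ := hloop
      have hd2 : ({a, b} : Finset α) ∈ E₂ := by
        rw [hE₂, Finset.mem_filter]
        exact ⟨habE, Finset.card_pair hab⟩
      rw [loop_zero hd2 (edgeSetoid_pair_le_iff.mpr habrel), mul_zero, mul_zero]
    · push_neg at hloop
      exact le_trans zero_le_one (key F hF (fun a b hab hmem => hloop a b hab hmem))
  calc (1 : ℤ) ≤ _ := hterm0
    _ ≤ ∑ F ∈ B.powerset, (-1 : ℤ) ^ (n + 1) * ((-1 : ℤ) ^ F.card * gsum (conSetoid F) E₂) :=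
        Finset.single_le_sum hnonneg (Finset.mem_powerset.mpr (Finset.empty_subset B))

lemma card_mono_colorings [Fintype α] [DecidableEq α] (S : Finset (Finset α)) (k : ℕ) :
    (Finset.univ.filter fun φ : α → Fin k => ∀ e ∈ S, ∀ x ∈ e, ∀ y ∈ e, φ x = φ y).card
      = k ^ nclasses (conSetoid S) := by
  classical
  letI : Fintype (Quotient (conSetoid S)) := Fintype.ofFinite _
  have key : ∀ φ : α → Fin k,
      (∀ e ∈ S, ∀ x ∈ e, ∀ y ∈ e, φ x = φ y) ↔ conSetoid S ≤ Setoid.ker φ := by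
    intro φ
    rw [conSetoid, Finset.sup_le_iff]
    apply forall₂_congr
    intro e _
    rw [edgeSetoid_le_iff]
    rfl
  let eqv : {φ : α → Fin k // ∀ e ∈ S, ∀ x ∈ e, ∀ y ∈ e, φ x = φ y}
      ≃ (Quotient (conSetoid S) → Fin k) :=
    { toFun := fun φ => Quotient.lift φ.1 (fun a b hab => (key φ.1).mp φ.2 hab)
      invFun := fun ψ => ⟨fun a => ψ (Quotient.mk _ a), by
        intro e he x hx y hy
        exact congrArg ψ (Quotient.sound (edge_le_conSetoid he (Or.inr ⟨hx, hy⟩)))⟩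
      left_inv := fun φ => Subtype.ext rfl
      right_inv := fun ψ => funext fun q => by
        induction q using Quotient.ind
        rfl }
  rw [← Fintype.card_subtype, Fintype.card_congr eqv, Fintype.card_fun, Fintype.card_fin,
    nclasses, Nat.card_eq_fintype_card]

/-- Inclusion–exclusion for the number of weak proper colorings. -/
lemma count_eq [Fintype α] [DecidableEq α] (E : Finset (Finset α)) (k : ℕ) :
    (countColorings E k : ℤ)
      = ∑ S ∈ E.powerset, (-1 : ℤ) ^ S.card * (k : ℤ) ^ nclasses (conSetoid S) := by
  classical
  have hBad : ∀ φ : α → Fin k, IsWeakProper E φ ↔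
      (E.filter fun e => ∀ x ∈ e, ∀ y ∈ e, φ x = φ y) = ∅ := by
    intro φ
    rw [Finset.filter_eq_empty_iff]
    unfold IsWeakProper
    apply forall₂_congr
    intro e _
    constructor
    · rintro ⟨u, hu, v, hv, hne⟩ hmono
      exact hne (hmono u hu v hv)
    · intro h
      by_contra hcon
      push_neg at hcon
      exact h hcon
  have step1 : (countColorings E k : ℤ)
      = ∑ φ ∈ (Finset.univ : Finset (α → Fin k)), if IsWeakProper E φ then (1 : ℤ) else 0 := by
    rw [countColorings, Finset.sum_boole]
  rw [step1]
  have step2 : ∀ φ : α → Fin k, (if IsWeakProper E φ then (1 : ℤ) else 0)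
      = ∑ S ∈ E.powerset, if S ⊆ (E.filter fun e => ∀ x ∈ e, ∀ y ∈ e, φ x = φ y)
          then (-1 : ℤ) ^ S.card else 0 := by
    intro φ
    set Bad := E.filter fun e => ∀ x ∈ e, ∀ y ∈ e, φ x = φ y with hBadDef
    have hpow : Bad.powerset = E.powerset.filter (fun S => S ⊆ Bad) := by
      ext S
      simp only [Finset.mem_powerset, Finset.mem_filter]
      constructor
      · intro h; exact ⟨h.trans (Finset.filter_subset _ E), h⟩
      · exact fun h => h.2
    calc (if IsWeakProper E φ then (1 : ℤ) else 0)
        = (if Bad = ∅ then (1 : ℤ) else 0) := if_congr (hBad φ) rfl rfl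
      _ = ∑ S ∈ Bad.powerset, (-1 : ℤ) ^ S.card := Finset.sum_powerset_neg_one_pow_card.symm
      _ = ∑ S ∈ E.powerset.filter (fun S => S ⊆ Bad), (-1 : ℤ) ^ S.card := by rw [hpow]
      _ = ∑ S ∈ E.powerset, if S ⊆ Bad then (-1 : ℤ) ^ S.card else 0 := Finset.sum_filter _ _
  rw [Finset.sum_congr rfl (fun φ _ => step2 φ), Finset.sum_comm]
  apply Finset.sum_congr rfl
  intro S hS
  rw [Finset.mem_powerset] at hS
  have hiff : ∀ φ : α → Fin k,
      (S ⊆ E.filter fun e => ∀ x ∈ e, ∀ y ∈ e, φ x = φ y) ↔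
        (∀ e ∈ S, ∀ x ∈ e, ∀ y ∈ e, φ x = φ y) := by
    intro φ
    constructor
    · intro h e he x hx y hy
      exact (Finset.mem_filter.mp (h he)).2 x hx y hy
    · intro h e he
      exact Finset.mem_filter.mpr ⟨hS he, h e he⟩
  calc ∑ φ ∈ (Finset.univ : Finset (α → Fin k)),
        (if S ⊆ E.filter fun e => ∀ x ∈ e, ∀ y ∈ e, φ x = φ y then (-1 : ℤ) ^ S.card else 0)
      = ∑ φ ∈ (Finset.univ : Finset (α → Fin k)),
        (if (∀ e ∈ S, ∀ x ∈ e, ∀ y ∈ e, φ x = φ y) then (-1 : ℤ) ^ S.card else 0) := by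
        apply Finset.sum_congr rfl
        intro φ _
        rw [if_congr (hiff φ) rfl rfl]
    _ = ∑ φ ∈ (Finset.univ.filter fun φ : α → Fin k => ∀ e ∈ S, ∀ x ∈ e, ∀ y ∈ e, φ x = φ y),
          (-1 : ℤ) ^ S.card := (Finset.sum_filter _ _).symm
    _ = ((Finset.univ.filter fun φ : α → Fin k =>
          ∀ e ∈ S, ∀ x ∈ e, ∀ y ∈ e, φ x = φ y).card : ℤ) * (-1 : ℤ) ^ S.card := by
        rw [Finset.sum_const, nsmul_eq_mul]
    _ = (-1 : ℤ) ^ S.card * (k : ℤ) ^ nclasses (conSetoid S) := by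
        rw [card_mono_colorings S k]
        push_cast
        ring

/-- If `H ∈ L0'`, then the chromatic polynomial of `H` has no multiple zero at `0`,
i.e. `X²` does not divide it. -/
theorem stmt2 {α : Type} [Fintype α] [DecidableEq α] (E : Finset (Finset α))
    (hne : ∀ e ∈ E, e.Nonempty) (hE : MemL0' E)
    (p : Polynomial ℝ)
    (hp : ∀ k : ℕ, 0 < k → p.eval (k : ℝ) = countColorings E k) :
    ¬ (Polynomial.X ^ 2 ∣ p) := by
  intro hdvd
  classical
  haveI : Nonempty α := hE.2.nonempty
  set Pp : Polynomial ℝ := ∑ S ∈ E.powerset,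
    Polynomial.C ((-1 : ℝ) ^ S.card) * Polynomial.X ^ nclasses (conSetoid S) with hPp
  have heval : ∀ k : ℕ, Pp.eval (k : ℝ)
      = ∑ S ∈ E.powerset, (-1 : ℝ) ^ S.card * (k : ℝ) ^ nclasses (conSetoid S) := by
    intro k
    rw [hPp, Polynomial.eval_finset_sum]
    apply Finset.sum_congr rfl
    intro S _
    simp
  have hagree : ∀ k : ℕ, 0 < k → p.eval ((k : ℕ) : ℝ) = Pp.eval ((k : ℕ) : ℝ) := by
    intro k hk
    rw [hp k hk, heval k]
    exact_mod_cast count_eq E k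
  have hpPp : p = Pp := by
    apply Polynomial.eq_of_infinite_eval_eq
    apply Set.infinite_of_injective_forall_mem (f := fun k : ℕ => ((k + 1 : ℕ) : ℝ))
    · intro a b hab
      have : (a + 1 : ℕ) = (b + 1 : ℕ) := Nat.cast_injective hab
      omega
    · intro k
      exact hagree (k + 1) (Nat.succ_pos k)
  set A : ℤ := ∑ S ∈ E.powerset, (-1 : ℤ) ^ S.card * indTop (conSetoid S) with hA'
  have hcoeff : Pp.coeff 1 = (A : ℝ) := by
    rw [hPp, Polynomial.finset_sum_coeff, hA', Int.cast_sum]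
    apply Finset.sum_congr rfl
    intro S _
    rw [Polynomial.coeff_C_mul, Polynomial.coeff_X_pow]
    have hiff : ((1 : ℕ) = nclasses (conSetoid S)) ↔ (conSetoid S = ⊤) :=
      eq_comm.trans nclasses_eq_one_iff
    have h2 : (if (1 : ℕ) = nclasses (conSetoid S) then (1 : ℝ) else 0)
        = ((indTop (conSetoid S) : ℤ) : ℝ) := by
      unfold indTop
      rw [if_congr hiff rfl rfl]
      split <;> simp
    rw [h2]
    push_cast
    ring
  have hc1 : p.coeff 1 = 0 := by
    obtain ⟨q, hq⟩ := hdvd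
    rw [hq, mul_comm, Polynomial.coeff_mul_X_pow']
    norm_num
  have hA0 : A = 0 := by
    have : (A : ℝ) = 0 := by rw [← hcoeff, ← hpPp, hc1]
    exact_mod_cast this
  have hmain := main_sign hne hE
  rw [← hA', hA0, mul_zero] at hmain
  exact absurd hmain (by norm_num)
end
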